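/- arXiv:2511.15595 — 4 statements merged into one kernel-verified Lean document; each statement's English description precedes it below -/
import Mathlib

section
/- For the sequence (n_k)_{k≥1} constructed from blocks Δ_i and sub-blocks Δ_i^{(m)} via n_k := 2^{2^{2^{2^i}}}·(2^{k+i·m} + m) for k ∈ Δ_i^{(m)}, one has liminf_{k→∞} n_{k+1}/n_k = 2; in particular (n_k) is a lacunary sequence. -/
open Filter

/-- The block `Δ_i = {2^{3^i−1}, …, 2^{3^{i+1}−1} − 1}`. -/
def Blk (i : ℕ) : Finset ℕ := Finset.Ico (2^(3^i - 1)) (2^(3^(i+1) - 1))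

/-- `M(i) = ⌈g(#Δ_i)⌉`. -/
noncomputable def Mblk (g : ℕ → ℝ) (i : ℕ) : ℕ := ⌈g ((Blk i).card)⌉₊


def eBlk (i : ℕ) : ℕ := 2^(3^i - 1)

lemma Blk_eq (i : ℕ) : Blk i = Finset.Ico (eBlk i) (eBlk (i+1)) := rfl

lemma eBlk_zero : eBlk 0 = 1 := rfl

lemma eBlk_strictMono : StrictMono eBlk := by
  apply strictMono_nat_of_lt_succ
  intro i
  apply Nat.pow_lt_pow_right (by norm_num)
  have h1 : 3^i < 3^(i+1) := Nat.pow_lt_pow_right (by norm_num) (by omega)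
  have h2 : 1 ≤ 3^i := Nat.one_le_pow _ _ (by norm_num)
  omega

lemma mem_Blk {k i : ℕ} : k ∈ Blk i ↔ eBlk i ≤ k ∧ k < eBlk (i+1) := by
  rw [Blk_eq]; exact Finset.mem_Ico

lemma exists_block : ∀ k : ℕ, 1 ≤ k → ∃ i, k ∈ Blk i := by
  intro k hk
  induction k with
  | zero => omega
  | succ j ih =>
    rcases Nat.lt_or_ge j 1 with h | h
    · refine ⟨0, ?_⟩
      have : j = 0 := by omega
      subst this
      rw [mem_Blk]
      exact ⟨le_refl _, by norm_num [eBlk]⟩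
    · obtain ⟨i, hi⟩ := ih h
      rw [mem_Blk] at hi
      rcases Nat.lt_or_ge (j+1) (eBlk (i+1)) with h2 | h2
      · exact ⟨i, mem_Blk.mpr ⟨by omega, h2⟩⟩
      · exact ⟨i+1, mem_Blk.mpr ⟨h2, by
          have := eBlk_strictMono (show i+1 < i+1+1 by omega); omega⟩⟩

lemma block_unique {k i j : ℕ} (hi : k ∈ Blk i) (hj : k ∈ Blk j) : i = j := by
  rw [mem_Blk] at hi hj
  by_contra hne
  rcases Nat.lt_or_ge i j with h | h
  · have := eBlk_strictMono.monotone (show i+1 ≤ j by omega); omega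
  · have hj' : j < i := by omega
    have := eBlk_strictMono.monotone (show j+1 ≤ i by omega); omega

lemma card_Blk (i : ℕ) : (Blk i).card = eBlk (i+1) - eBlk i := by
  rw [Blk_eq, Nat.card_Ico]

lemma card_Blk_pos (i : ℕ) : 1 ≤ (Blk i).card := by
  rw [card_Blk]
  have := eBlk_strictMono (show i < i+1 by omega); omega

lemma M_pos (g : ℕ → ℝ) (hg_bounds : ∀ N : ℕ, 1 ≤ N → 1 ≤ g N ∧ g N ≤ N) (i : ℕ) :
    1 ≤ Mblk g i := by
  have h := (hg_bounds _ (card_Blk_pos i)).1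
  rw [Mblk, Nat.one_le_ceil_iff]
  linarith

lemma M_le_card (g : ℕ → ℝ) (hg_bounds : ∀ N : ℕ, 1 ≤ N → 1 ≤ g N ∧ g N ≤ N) (i : ℕ) :
    Mblk g i ≤ (Blk i).card := by
  have h := (hg_bounds _ (card_Blk_pos i)).2
  exact Nat.ceil_le.mpr (by exact_mod_cast h)

section Sub

variable {g : ℕ → ℝ} {blk : ℕ → ℕ → Finset ℕ}

lemma sub_subset
    (hcover : ∀ i k, k ∈ Blk i ↔ ∃ m, m ∈ Finset.Icc 1 (Mblk g i) ∧ k ∈ blk i m)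
    {i m : ℕ} (hm : m ∈ Finset.Icc 1 (Mblk g i)) : blk i m ⊆ Blk i := by
  intro k hk
  exact (hcover i k).mpr ⟨m, hm, hk⟩

lemma blk_biUnion
    (hcover : ∀ i k, k ∈ Blk i ↔ ∃ m, m ∈ Finset.Icc 1 (Mblk g i) ∧ k ∈ blk i m)
    (i : ℕ) : Blk i = (Finset.Icc 1 (Mblk g i)).biUnion (blk i) := by
  ext k
  simp only [Finset.mem_biUnion, hcover i k]

lemma sum_card
    (hcover : ∀ i k, k ∈ Blk i ↔ ∃ m, m ∈ Finset.Icc 1 (Mblk g i) ∧ k ∈ blk i m)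
    (hdisj : ∀ i m m', m ≠ m' → Disjoint (blk i m) (blk i m'))
    (i : ℕ) :
    ∑ m ∈ Finset.Icc 1 (Mblk g i), (blk i m).card = (Blk i).card := by
  rw [blk_biUnion hcover i, Finset.card_biUnion]
  intro m _ m' _ hne
  exact hdisj i m m' hne

lemma sub_nonempty
    (hg_bounds : ∀ N : ℕ, 1 ≤ N → 1 ≤ g N ∧ g N ≤ N)
    (hcover : ∀ i k, k ∈ Blk i ↔ ∃ m, m ∈ Finset.Icc 1 (Mblk g i) ∧ k ∈ blk i m)
    (hdisj : ∀ i m m', m ≠ m' → Disjoint (blk i m) (blk i m'))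
    (hcard : ∀ i, ∀ m ∈ Finset.Icc 1 (Mblk g i), ∀ m' ∈ Finset.Icc 1 (Mblk g i),
      (blk i m).card ≤ (blk i m').card + 1)
    {i m : ℕ} (hm : m ∈ Finset.Icc 1 (Mblk g i)) : (blk i m).Nonempty := by
  rw [Finset.nonempty_iff_ne_empty]
  intro hemp
  have hlt : ∑ m' ∈ Finset.Icc 1 (Mblk g i), (blk i m').card
      < ∑ m' ∈ Finset.Icc 1 (Mblk g i), 1 := by
    apply Finset.sum_lt_sum
    · intro m' hm'
      have := hcard i m' hm' m hm
      rw [hemp] at this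
      simpa using this
    · exact ⟨m, hm, by rw [hemp]; simp⟩
  rw [sum_card hcover hdisj i, Finset.sum_const, smul_eq_mul, mul_one, Nat.card_Icc] at hlt
  have := M_le_card g hg_bounds i
  omega

lemma mem_next
    (hg_bounds : ∀ N : ℕ, 1 ≤ N → 1 ≤ g N ∧ g N ≤ N)
    (hcover : ∀ i k, k ∈ Blk i ↔ ∃ m, m ∈ Finset.Icc 1 (Mblk g i) ∧ k ∈ blk i m)
    (hdisj : ∀ i m m', m ≠ m' → Disjoint (blk i m) (blk i m'))
    (hconsec : ∀ i m m', m < m' → ∀ k ∈ blk i m, ∀ k' ∈ blk i m', k < k')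
    (hcard : ∀ i, ∀ m ∈ Finset.Icc 1 (Mblk g i), ∀ m' ∈ Finset.Icc 1 (Mblk g i),
      (blk i m).card ≤ (blk i m').card + 1)
    {i m k : ℕ} (hm : m ∈ Finset.Icc 1 (Mblk g i)) (hk : k ∈ blk i m)
    (hk1 : k + 1 ∈ Blk i) (hnot : k + 1 ∉ blk i m) :
    m + 1 ∈ Finset.Icc 1 (Mblk g i) ∧ k + 1 ∈ blk i (m+1) := by
  obtain ⟨m', hm', hkm'⟩ := (hcover i (k+1)).mp hk1
  have hgt : m < m' := by
    rcases Nat.lt_trichotomy m m' with h | h | h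
    · exact h
    · exact absurd (h ▸ hkm') hnot
    · exact absurd (hconsec i m' m h _ hkm' _ hk) (by omega)
  rcases Nat.eq_or_lt_of_le (Nat.succ_le_of_lt hgt) with h | h
  · rw [show m' = m + 1 from h.symm] at hm' hkm'
    exact ⟨hm', hkm'⟩
  · exfalso
    have hmid : m + 1 ∈ Finset.Icc 1 (Mblk g i) := by
      simp only [Finset.mem_Icc] at hm hm' ⊢
      omega
    obtain ⟨k'', hk''⟩ := sub_nonempty hg_bounds hcover hdisj hcard hmid
    have h1 := hconsec i m (m+1) (by omega) _ hk _ hk''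
    have h2 := hconsec i (m+1) m' h _ hk'' _ hkm'
    omega

lemma pair_in_subblock
    (hcover : ∀ i k, k ∈ Blk i ↔ ∃ m, m ∈ Finset.Icc 1 (Mblk g i) ∧ k ∈ blk i m)
    (hconsec : ∀ i m m', m < m' → ∀ k ∈ blk i m, ∀ k' ∈ blk i m', k < k')
    {i m : ℕ} (hm : m ∈ Finset.Icc 1 (Mblk g i)) (h2 : 2 ≤ (blk i m).card) :
    ∃ k, k ∈ blk i m ∧ k + 1 ∈ blk i m := by
  obtain ⟨a, ha, b, hb, hab⟩ := Finset.one_lt_card.mp h2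
  wlog hlt : a < b generalizing a b
  · exact this b hb a ha (Ne.symm hab) (by omega)
  refine ⟨a, ha, ?_⟩
  have haB : a ∈ Blk i := sub_subset hcover hm ha
  have hbB : b ∈ Blk i := sub_subset hcover hm hb
  have ha1B : a + 1 ∈ Blk i := by
    rw [mem_Blk] at haB hbB ⊢
    omega
  obtain ⟨m', hm', hm'mem⟩ := (hcover i (a+1)).mp ha1B
  have : m' = m := by
    rcases Nat.lt_trichotomy m m' with h | h | h
    · have := hconsec i m m' h _ hb _ hm'mem
      omega
    · omega
    · have := hconsec i m' m h _ hm'mem _ ha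
      omega
  exact this ▸ hm'mem

end Sub

-- copy numeric lemmas assumed present (will merge)

lemma lem_i2 : ∀ i : ℕ, 2 ≤ i → i + 2 ≤ 2^i := by
  intro i hi
  induction i with
  | zero => omega
  | succ j ih =>
    rcases Nat.lt_or_ge j 2 with h | h
    · interval_cases j <;> first | omega | norm_num
    · have := ih h
      have h1 : (1:ℕ) ≤ 2^j := Nat.one_le_two_pow
      have h2 : 2^(j+1) = 2^j + 2^j := by ring
      omega

lemma lem_3pow : ∀ i : ℕ, 2 ≤ i → 2^(i+1) ≤ 3^i := by
  intro i hi
  induction i with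
  | zero => omega
  | succ j ih =>
    rcases Nat.lt_or_ge j 2 with h | h
    · interval_cases j <;> first | omega | norm_num
    · have := ih h
      calc 2^(j+2) = 2 * 2^(j+1) := by ring
      _ ≤ 3 * 3^j := by omega
      _ = 3^(j+1) := by ring

lemma lem_N1 (i : ℕ) (hi : 2 ≤ i) : 2 * 3^(i+1) ≤ 2^(3^i - 1) := by
  have h1 : 3^(i+1) ≤ 2^(2*(i+1)) := by
    calc 3^(i+1) ≤ 4^(i+1) := Nat.pow_le_pow_left (by norm_num) _
    _ = 2^(2*(i+1)) := by rw [show (4:ℕ) = 2^2 by norm_num, ← pow_mul]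
  have h2 : 2*(i+1) + 1 ≤ 3^i - 1 := by
    have h3 : 2^(i+1) ≤ 3^i := lem_3pow i hi
    have h4 : i + 2 ≤ 2^i := lem_i2 i hi
    have h5 : 2^(i+1) = 2^i + 2^i := by ring
    omega
  calc 2 * 3^(i+1) ≤ 2 * 2^(2*(i+1)) := by omega
  _ = 2^(2*(i+1)+1) := by ring
  _ ≤ 2^(3^i - 1) := Nat.pow_le_pow_right (by norm_num) h2

lemma lem_sum_pow (a b : ℕ) (ha : 1 ≤ a) (hb : 1 ≤ b) : 2^a + 2^b + 2 ≤ 2^(a+b+2) := by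
  have h1 : 2^a ≤ 2^(a+b) := Nat.pow_le_pow_right (by norm_num) (by omega)
  have h2 : 2^b ≤ 2^(a+b) := Nat.pow_le_pow_right (by norm_num) (by omega)
  have h3 : 2 ≤ 2^(a+b) := by
    calc (2:ℕ) = 2^1 := rfl
    _ ≤ 2^(a+b) := Nat.pow_le_pow_right (by norm_num) (by omega)
  have h4 : 2^(a+b+2) = 4 * 2^(a+b) := by ring
  omega

lemma lem_NAT : ∀ i : ℕ, 2 ≤ i → 2^(2^i) + 2*3^(i+1) + 2 ≤ 2^(2^(i+1)) := by
  intro i hi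
  induction i with
  | zero => omega
  | succ j ih =>
    rcases Nat.lt_or_ge j 2 with h | h
    · interval_cases j <;> first | omega | norm_num
    · have IH := ih h
      have hx : (256:ℕ) ≤ 2^(2^(j+1)) := by
        calc (256:ℕ) = 2^8 := by norm_num
        _ ≤ 2^(2^(j+1)) := Nat.pow_le_pow_right (by norm_num) (by
            calc 8 = 2^3 := by norm_num
            _ ≤ 2^(j+1) := Nat.pow_le_pow_right (by norm_num) (by omega))
      have h3 : 2*3^(j+1) ≤ 2^(2^(j+1)) := le_trans (by linarith [Nat.zero_le (2^(2^j))]) IH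
      have hsq : 2^(2^(j+1+1)) = 2^(2^(j+1)) * 2^(2^(j+1)) := by
        rw [← pow_add]; congr 1; ring
      have h5 : 2*3^(j+1+1) = 3*(2*3^(j+1)) := by ring
      rw [hsq, h5]
      nlinarith [hx, h3]

lemma i_ge_two {k i : ℕ} (hk : 256 ≤ k) (hki : k ∈ Blk i) : 2 ≤ i := by
  by_contra h
  push_neg at h
  rw [mem_Blk] at hki
  have h1 : eBlk (i+1) ≤ eBlk 2 := eBlk_strictMono.monotone (by omega)
  have h2 : eBlk 2 = 256 := by norm_num [eBlk]
  omega

lemma m_small {g : ℕ → ℝ}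
    (hg_bounds : ∀ N : ℕ, 1 ≤ N → 1 ≤ g N ∧ g N ≤ N)
    {i m k : ℕ} (hi : 2 ≤ i) (hm : m ≤ Mblk g i) (hk : k ∈ Blk i) :
    m ≤ 2^(k/2) := by
  have h1 : m ≤ (Blk i).card := le_trans hm (M_le_card g hg_bounds i)
  have h2 : (Blk i).card ≤ eBlk (i+1) := by
    rw [card_Blk]; omega
  have h3 : eBlk i ≤ k := (mem_Blk.mp hk).1
  have h4 : 2 * 3^(i+1) ≤ eBlk i := lem_N1 i hi
  have h5 : 3^(i+1) - 1 ≤ k / 2 := by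
    rw [Nat.le_div_iff_mul_le (by norm_num)]
    have : 1 ≤ 3^(i+1) := Nat.one_le_pow _ _ (by norm_num)
    omega
  calc m ≤ eBlk (i+1) := by omega
  _ = 2^(3^(i+1) - 1) := rfl
  _ ≤ 2^(k/2) := Nat.pow_le_pow_right (by norm_num) h5

lemma two_le_ratio {a b : ℕ} (ha : 0 < a) (h : 2*a ≤ b) : (2:ℝ) ≤ (b:ℝ)/(a:ℝ) := by
  rw [le_div_iff₀ (by exact_mod_cast ha)]
  exact_mod_cast h

lemma ratio_ge_aux (T A M2 d : ℝ) (hT : 0 < T) (hA : 0 < A) (hm : 0 ≤ M2) (hd : 0 ≤ d)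
    (hdA : M2 ≤ d * A) :
    2 - d ≤ (T*(2*A+M2))/(T*(A+M2)) := by
  rw [le_div_iff₀ (by positivity)]
  have h1 : (2-d)*(A+M2) ≤ 2*A+M2 := by nlinarith
  calc (2-d)*(T*(A+M2)) = T*((2-d)*(A+M2)) := by ring
  _ ≤ T*(2*A+M2) := by nlinarith

lemma exponent_bound (i k m : ℕ) (hi : 2 ≤ i) (hk : k < 2^(3^(i+1)-1)) (hm : m ≤ 2^(3^(i+1)-1)) :
    2^(2^(2^i)) + (k + i*m) + 2 ≤ 2^(2^(2^(i+1))) := by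
  have h1 : i*m ≤ i*(2^(3^(i+1)-1)) := Nat.mul_le_mul_left i hm
  have h2 : (i+1)*(2^(3^(i+1)-1)) ≤ 2^i * 2^(3^(i+1)-1) :=
    Nat.mul_le_mul_right _ (by have := lem_i2 i hi; omega)
  have h2' : i*(2^(3^(i+1)-1)) + 2^(3^(i+1)-1) ≤ 2^i * 2^(3^(i+1)-1) := by
    rw [add_mul, one_mul] at h2; exact h2
  have h4 : i + (3^(i+1)-1) ≤ 2*3^(i+1) := by
    have ha : i < 2^i := Nat.lt_two_pow_self
    have hb : 2^i ≤ 2^(i+1) := Nat.pow_le_pow_right (by norm_num) (by omega)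
    have hc : 2^(i+1) ≤ 3^i := lem_3pow i hi
    have hd : 3^i ≤ 3^(i+1) := Nat.pow_le_pow_right (by norm_num) (by omega)
    have he : 1 ≤ 3^(i+1) := Nat.one_le_pow _ _ (by norm_num)
    omega
  have h5 : 2^i * 2^(3^(i+1)-1) ≤ 2^(2*3^(i+1)) := by
    rw [← pow_add]
    exact Nat.pow_le_pow_right (by norm_num) h4
  have h6 : 2^(2^(2^i)) + 2^(2*3^(i+1)) + 2 ≤ 2^(2^(2^i) + 2*3^(i+1) + 2) :=
    lem_sum_pow _ _ (Nat.one_le_pow _ _ (by norm_num)) (by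
      have := Nat.one_le_pow (i+1) 3 (by norm_num); omega)
  have h8 : 2^(2^(2^i) + 2*3^(i+1) + 2) ≤ 2^(2^(2^(i+1))) :=
    Nat.pow_le_pow_right (by norm_num) (lem_NAT i hi)
  linarith

lemma eventual_bound {g : ℕ → ℝ} {blk : ℕ → ℕ → Finset ℕ} {n : ℕ → ℕ}
    (hg_bounds : ∀ N : ℕ, 1 ≤ N → 1 ≤ g N ∧ g N ≤ N)
    (hcover : ∀ i k, k ∈ Blk i ↔ ∃ m, m ∈ Finset.Icc 1 (Mblk g i) ∧ k ∈ blk i m)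
    (hdisj : ∀ i m m', m ≠ m' → Disjoint (blk i m) (blk i m'))
    (hconsec : ∀ i m m', m < m' → ∀ k ∈ blk i m, ∀ k' ∈ blk i m', k < k')
    (hcard : ∀ i, ∀ m ∈ Finset.Icc 1 (Mblk g i), ∀ m' ∈ Finset.Icc 1 (Mblk g i),
      (blk i m).card ≤ (blk i m').card + 1)
    (hn : ∀ i, ∀ m ∈ Finset.Icc 1 (Mblk g i), ∀ k ∈ blk i m,
      n k = 2^(2^(2^(2^i))) * (2^(k + i*m) + m))
    {k : ℕ} (hk : 256 ≤ k) :
    0 < n k ∧ (2:ℝ) - (1/2)^(k/2) ≤ (n (k+1):ℝ)/(n k) := by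
  obtain ⟨i, hkB⟩ := exists_block k (by omega)
  have hi2 : 2 ≤ i := i_ge_two hk hkB
  obtain ⟨m, hm, hkm⟩ := (hcover i k).mp hkB
  have hnk : n k = 2^(2^(2^(2^i))) * (2^(k+i*m)+m) := hn i m hm k hkm
  have hmM : m ≤ Mblk g i := (Finset.mem_Icc.mp hm).2
  have hm1 : 1 ≤ m := (Finset.mem_Icc.mp hm).1
  have hms : m ≤ 2^(k/2) := m_small hg_bounds hi2 hmM hkB
  have hkk : 2^(k/2) * 2^(k/2) ≤ 2^k := by
    rw [← pow_add]; exact Nat.pow_le_pow_right (by norm_num) (by omega)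
  have hAk : (2:ℕ)^k ≤ 2^(k+i*m) := Nat.pow_le_pow_right (by norm_num) (by omega)
  have h2k : (2:ℕ)^(k/2) ≤ 2^k := Nat.pow_le_pow_right (by norm_num) (by omega)
  have hmA : m ≤ 2^(k+i*m) := le_trans hms (le_trans h2k hAk)
  have hkey : m * 2^(k/2) ≤ 2^(k+i*m) :=
    le_trans (Nat.mul_le_mul_right _ hms) (le_trans hkk hAk)
  have hnkpos : 0 < n k := by rw [hnk]; positivity
  refine ⟨hnkpos, ?_⟩
  have hd0 : (0:ℝ) ≤ (1/2:ℝ)^(k/2) := by positivity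
  by_cases hc1 : k+1 ∈ blk i m
  · -- same sub-block
    have hnk1 : n (k+1) = 2^(2^(2^(2^i))) * (2^(k+1+i*m)+m) := hn i m hm (k+1) hc1
    have hdA : (m:ℝ) ≤ (1/2:ℝ)^(k/2) * (2:ℝ)^(k+i*m) := by
      have hp : (0:ℝ) < (2:ℝ)^(k/2) := by positivity
      rw [show ((1:ℝ)/2)^(k/2) = ((2:ℝ)^(k/2))⁻¹ by rw [one_div, inv_pow],
        inv_mul_eq_div, le_div_iff₀ hp]
      exact_mod_cast hkey
    have := ratio_ge_aux ((2:ℝ)^(2^(2^(2^i)))) ((2:ℝ)^(k+i*m)) (m:ℝ) ((1/2:ℝ)^(k/2))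
      (by positivity) (by positivity) (by positivity) hd0 hdA
    rw [hnk, hnk1]
    push_cast
    convert this using 3
    rw [show k+1+i*m = (k+i*m)+1 by ring, pow_succ]
    ring
  · by_cases hc2 : k+1 ∈ Blk i
    · -- next sub-block
      obtain ⟨hm', hkm'⟩ := mem_next hg_bounds hcover hdisj hconsec hcard hm hkm hc2 hc1
      have hnk1 : n (k+1) = 2^(2^(2^(2^i))) * (2^(k+1+i*(m+1))+(m+1)) :=
        hn i (m+1) hm' (k+1) hkm'
      have hnat : 2 * n k ≤ n (k+1) := by
        rw [hnk, hnk1, mul_left_comm]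
        apply Nat.mul_le_mul_left
        have he : (2:ℕ)^(k+1+i*(m+1)) = 2^(k+i*m) * 2^(i+1) := by
          rw [← pow_add]; congr 1; ring
        have h8 : (8:ℕ) ≤ 2^(i+1) := by
          calc (8:ℕ) = 2^3 := by norm_num
          _ ≤ 2^(i+1) := Nat.pow_le_pow_right (by norm_num) (by omega)
        have hA1 : 1 ≤ 2^(k+i*m) := Nat.one_le_pow _ _ (by norm_num)
        rw [he]
        nlinarith
      calc (2:ℝ) - (1/2)^(k/2) ≤ 2 := by linarith
      _ ≤ (n (k+1):ℝ)/(n k) := two_le_ratio hnkpos hnat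
    · -- next block
      have hkb := mem_Blk.mp hkB
      have hkeq : k + 1 = eBlk (i+1) := by
        rcases Nat.lt_or_ge (k+1) (eBlk (i+1)) with h | h
        · exact absurd (mem_Blk.mpr ⟨by omega, h⟩) hc2
        · omega
      have hk1B : k+1 ∈ Blk (i+1) := mem_Blk.mpr ⟨by omega, by
        have := eBlk_strictMono (show i+1 < i+1+1 by omega); omega⟩
      obtain ⟨m', hm'2, hkm'⟩ := (hcover (i+1) (k+1)).mp hk1B
      have hnk1 : n (k+1) = 2^(2^(2^(2^(i+1)))) * (2^(k+1+(i+1)*m')+m') :=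
        hn (i+1) m' hm'2 (k+1) hkm'
      have hmP : m ≤ 2^(3^(i+1)-1) := by
        have := le_trans hmM (M_le_card g hg_bounds i)
        have h2 : (Blk i).card ≤ eBlk (i+1) := by rw [card_Blk]; omega
        calc m ≤ eBlk (i+1) := by omega
        _ = 2^(3^(i+1)-1) := rfl
      have hkP : k < 2^(3^(i+1)-1) := by
        have : k < eBlk (i+1) := hkb.2
        exact this
      have hexp := exponent_bound i k m hi2 hkP hmP
      have hnat : 2 * n k ≤ n (k+1) := by
        calc 2 * n k = 2^(2^(2^(2^i))) * (2*(2^(k+i*m)+m)) := by rw [hnk]; ring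
        _ ≤ 2^(2^(2^(2^i))) * (4*2^(k+i*m)) := Nat.mul_le_mul_left _ (by omega)
        _ = 2^(2^(2^(2^i)) + (k+i*m) + 2) := by
            rw [pow_add, pow_add]; ring
        _ ≤ 2^(2^(2^(2^(i+1)))) := Nat.pow_le_pow_right (by norm_num) hexp
        _ ≤ n (k+1) := by
            rw [hnk1]
            exact Nat.le_mul_of_pos_right _ (by positivity)
      calc (2:ℝ) - (1/2)^(k/2) ≤ 2 := by linarith
      _ ≤ (n (k+1):ℝ)/(n k) := two_le_ratio hnkpos hnat

lemma sub_two {g : ℕ → ℝ} {blk : ℕ → ℕ → Finset ℕ}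
    (hcover : ∀ i k, k ∈ Blk i ↔ ∃ m, m ∈ Finset.Icc 1 (Mblk g i) ∧ k ∈ blk i m)
    (hdisj : ∀ i m m', m ≠ m' → Disjoint (blk i m) (blk i m'))
    (hcard : ∀ i, ∀ m ∈ Finset.Icc 1 (Mblk g i), ∀ m' ∈ Finset.Icc 1 (Mblk g i),
      (blk i m).card ≤ (blk i m').card + 1)
    {i m : ℕ} (hNM : 2 * Mblk g i < (Blk i).card)
    (hm : m ∈ Finset.Icc 1 (Mblk g i)) : 2 ≤ (blk i m).card := by
  by_contra h
  push_neg at h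
  have hall : ∀ m' ∈ Finset.Icc 1 (Mblk g i), (blk i m').card ≤ 2 := by
    intro m' hm'
    have := hcard i m' hm' m hm
    omega
  have hsum : ∑ m' ∈ Finset.Icc 1 (Mblk g i), (blk i m').card
      ≤ ∑ m' ∈ Finset.Icc 1 (Mblk g i), 2 := Finset.sum_le_sum hall
  rw [sum_card hcover hdisj i, Finset.sum_const, smul_eq_mul, Nat.card_Icc] at hsum
  omega

lemma freq_lemma {g : ℕ → ℝ} {blk : ℕ → ℕ → Finset ℕ} {n : ℕ → ℕ}
    (hg_bounds : ∀ N : ℕ, 1 ≤ N → 1 ≤ g N ∧ g N ≤ N)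
    (hg_ratio_top : Filter.Tendsto (fun N : ℕ => (N : ℝ) / g N) Filter.atTop Filter.atTop)
    (hcover : ∀ i k, k ∈ Blk i ↔ ∃ m, m ∈ Finset.Icc 1 (Mblk g i) ∧ k ∈ blk i m)
    (hdisj : ∀ i m m', m ≠ m' → Disjoint (blk i m) (blk i m'))
    (hconsec : ∀ i m m', m < m' → ∀ k ∈ blk i m, ∀ k' ∈ blk i m', k < k')
    (hcard : ∀ i, ∀ m ∈ Finset.Icc 1 (Mblk g i), ∀ m' ∈ Finset.Icc 1 (Mblk g i),
      (blk i m).card ≤ (blk i m').card + 1)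
    (hn : ∀ i, ∀ m ∈ Finset.Icc 1 (Mblk g i), ∀ k ∈ blk i m,
      n k = 2^(2^(2^(2^i))) * (2^(k + i*m) + m)) :
    ∀ K : ℕ, ∃ k, K ≤ k ∧ 0 < n k ∧ (n (k+1) : ℕ) < 2 * n k := by
  intro K
  -- choose N0 such that N/g(N) ≥ 5 for N ≥ N0
  obtain ⟨N0, hN0⟩ := (Filter.tendsto_atTop.mp hg_ratio_top 5).exists_forall_of_atTop
  -- choose i large
  set i := max 2 (max K N0) with hidef
  have hi2 : 2 ≤ i := le_max_left _ _
  have hiK : K ≤ i := le_trans (le_max_left _ _) (le_max_right _ _)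
  have hiN0 : N0 ≤ i := le_trans (le_max_right _ _) (le_max_right _ _)
  have hei : i ≤ eBlk i := by
    have h1 : i < 2^i := Nat.lt_two_pow_self
    have h2 : i ≤ 3^i - 1 := by
      have := lem_3pow i hi2
      have h3 : 2^i ≤ 2^(i+1) := Nat.pow_le_pow_right (by norm_num) (by omega)
      have h4 : 1 ≤ 3^i := Nat.one_le_pow _ _ (by norm_num)
      omega
    calc i ≤ 2^i := by omega
    _ ≤ 2^(3^i-1) := Nat.pow_le_pow_right (by norm_num) h2
  have hcardbig : i ≤ (Blk i).card := by
    rw [card_Blk]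
    have h1 : 2 * eBlk i ≤ eBlk (i+1) := by
      have : eBlk i * 2 = 2^((3^i - 1) + 1) := by
        rw [eBlk, pow_succ]
      rw [mul_comm]
      rw [this]
      apply Nat.pow_le_pow_right (by norm_num)
      have h4 : 1 ≤ 3^i := Nat.one_le_pow _ _ (by norm_num)
      have h5 : 3^(i+1) = 3 * 3^i := by ring
      omega
    omega
  set N := (Blk i).card with hNdef
  have hN1 : 1 ≤ N := card_Blk_pos i
  have hNN0 : N0 ≤ N := le_trans hiN0 hcardbig
  have hratio : 5 ≤ (N:ℝ)/g N := hN0 N hNN0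
  have hgN : 1 ≤ g N := (hg_bounds N hN1).1
  have h5g : 5 * g N ≤ N := by
    rw [le_div_iff₀ (by linarith)] at hratio
    linarith
  have hMle : (Mblk g i : ℝ) < g N + 1 := by
    rw [Mblk, ← hNdef]
    exact Nat.ceil_lt_add_one (by linarith)
  have hNM : 2 * Mblk g i < N := by
    have : (2 * Mblk g i : ℝ) < (N:ℝ) := by
      push_cast
      nlinarith
    exact_mod_cast this
  have hMpos := M_pos g hg_bounds i
  have hm1 : (1:ℕ) ∈ Finset.Icc 1 (Mblk g i) := Finset.mem_Icc.mpr ⟨le_refl _, hMpos⟩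
  obtain ⟨k, hk1, hk2⟩ := pair_in_subblock hcover hconsec hm1
    (sub_two hcover hdisj hcard hNM hm1)
  have hkB : k ∈ Blk i := sub_subset hcover hm1 hk1
  have hkK : K ≤ k := by
    have := (mem_Blk.mp hkB).1
    omega
  have hnk : n k = 2^(2^(2^(2^i))) * (2^(k+i*1)+1) := hn i 1 hm1 k hk1
  have hnk1 : n (k+1) = 2^(2^(2^(2^i))) * (2^(k+1+i*1)+1) := hn i 1 hm1 (k+1) hk2
  refine ⟨k, hkK, by rw [hnk]; positivity, ?_⟩
  rw [hnk, hnk1, mul_left_comm]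
  apply mul_lt_mul_of_pos_left ?_ (by positivity : (0:ℕ) < 2^(2^(2^(2^i))))
  have : (2:ℕ)^(k+1+i*1) = 2 * 2^(k+i*1) := by
    rw [show k+1+i*1 = (k+i*1)+1 by ring, pow_succ]; ring
  omega

theorem statement5
    (g : ℕ → ℝ)
    (hg_bounds : ∀ N : ℕ, 1 ≤ N → 1 ≤ g N ∧ g N ≤ N)
    (hg_mono : ∀ N : ℕ, 1 ≤ N → g N ≤ g (N+1))
    (hg_ratio_mono : ∀ N : ℕ, 1 ≤ N → (N : ℝ) / g N ≤ ((N:ℝ)+1) / g (N+1))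
    (hg_top : Tendsto g atTop atTop)
    (hg_ratio_top : Tendsto (fun N : ℕ => (N : ℝ) / g N) atTop atTop)
    -- `blk i m`, `1 ≤ m ≤ M(i)`, are the consecutive sub-blocks Δ_i^{(m)} of Δ_i,
    -- with cardinalities differing by at most 1
    (blk : ℕ → ℕ → Finset ℕ)
    (hcover : ∀ i k, k ∈ Blk i ↔ ∃ m, m ∈ Finset.Icc 1 (Mblk g i) ∧ k ∈ blk i m)
    (hdisj : ∀ i m m', m ≠ m' → Disjoint (blk i m) (blk i m'))
    (hconsec : ∀ i m m', m < m' → ∀ k ∈ blk i m, ∀ k' ∈ blk i m', k < k')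
    (hcard : ∀ i, ∀ m ∈ Finset.Icc 1 (Mblk g i), ∀ m' ∈ Finset.Icc 1 (Mblk g i),
      (blk i m).card ≤ (blk i m').card + 1)
    -- n_k = 2^{2^{2^{2^i}}}·(2^{k+i·m} + m) for k ∈ Δ_i^{(m)}
    (n : ℕ → ℕ)
    (hn : ∀ i, ∀ m ∈ Finset.Icc 1 (Mblk g i), ∀ k ∈ blk i m,
      n k = 2^(2^(2^(2^i))) * (2^(k + i*m) + m)) :
    Filter.liminf (fun k : ℕ => (n (k+1) : ℝ) / (n k : ℝ)) atTop = 2 ∧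
    ∃ q : ℝ, 1 < q ∧ ∀ᶠ k in atTop, q * (n k : ℝ) ≤ (n (k+1) : ℝ) := by
  have hev : ∀ k : ℕ, 256 ≤ k →
      0 < n k ∧ (2:ℝ) - (1/2)^(k/2) ≤ (n (k+1):ℝ)/(n k) :=
    fun k hk => eventual_bound hg_bounds hcover hdisj hconsec hcard hn hk
  have hfreq0 := freq_lemma hg_bounds hg_ratio_top hcover hdisj hconsec hcard hn
  have hfreq : ∃ᶠ k in atTop, (n (k+1):ℝ)/(n k) ≤ 2 := by
    rw [Filter.frequently_atTop]
    intro a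
    obtain ⟨k, hka, hpos, hlt⟩ := hfreq0 a
    refine ⟨k, hka, ?_⟩
    rw [div_le_iff₀ (by exact_mod_cast hpos)]
    have : (n (k+1):ℝ) ≤ 2 * (n k : ℝ) := by exact_mod_cast le_of_lt hlt
    linarith
  have hbdd : Filter.IsBoundedUnder (· ≥ ·) atTop (fun k : ℕ => (n (k+1):ℝ)/(n k)) :=
    isBoundedUnder_of ⟨0, fun k => by positivity⟩
  have h_le : Filter.liminf (fun k : ℕ => (n (k+1):ℝ)/(n k)) atTop ≤ 2 :=
    Filter.liminf_le_of_frequently_le hfreq hbdd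
  have hcob : Filter.IsCoboundedUnder (· ≥ ·) atTop (fun k : ℕ => (n (k+1):ℝ)/(n k)) :=
    Filter.IsCoboundedUnder.of_frequently_le hfreq
  have h_ge : (2:ℝ) ≤ Filter.liminf (fun k : ℕ => (n (k+1):ℝ)/(n k)) atTop := by
    apply le_of_forall_sub_le
    intro ε hε
    obtain ⟨J, hJ⟩ := exists_pow_lt_of_lt_one hε (show (1/2:ℝ) < 1 by norm_num)
    apply Filter.le_liminf_of_le hcob
    filter_upwards [Filter.eventually_ge_atTop (max 256 (2*J))] with k hk
    have h256 : 256 ≤ k := le_trans (le_max_left _ _) hk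
    have h2J : 2*J ≤ k := le_trans (le_max_right _ _) hk
    have hJk : J ≤ k/2 := by omega
    have hmono : (1/2:ℝ)^(k/2) ≤ (1/2)^J :=
      pow_le_pow_of_le_one (by norm_num) (by norm_num) hJk
    have := (hev k h256).2
    linarith
  refine ⟨le_antisymm h_le h_ge, 3/2, by norm_num, ?_⟩
  filter_upwards [Filter.eventually_ge_atTop 256] with k hk
  obtain ⟨hpos, hge⟩ := hev k hk
  have h1k : 1 ≤ k/2 := by omega
  have hhalf : (1/2:ℝ)^(k/2) ≤ 1/2 := by
    calc (1/2:ℝ)^(k/2) ≤ (1/2)^1 :=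
      pow_le_pow_of_le_one (by norm_num) (by norm_num) h1k
    _ = 1/2 := pow_one _
  have h32 : (3/2:ℝ) ≤ (n (k+1):ℝ)/(n k) := by linarith
  have hpos' : (0:ℝ) < (n k : ℝ) := by exact_mod_cast hpos
  rw [← le_div_iff₀ hpos']
  exact h32
end

section
/- Let (n_k)_{k≥1} be a lacunary sequence of positive integers with growth factor η > 1 (i.e., n_{k+1}/n_k ≥ η for all k). Let (Λ_r)_{r≥1} be a sequence of finite subsets of ℕ with the property that for every M > 0 there exists r₀ ∈ ℕ such that for all r ≥ r₀ one has min_{k ∈ Λ_{r+1}} n_k / max_{k ∈ Λ_r} n_k ≥ M. Then for all positive integers a, b: sup_{c ∈ ℤ} Σ_{r ≠ s} #{(k,ℓ) : k ∈ Λ_r, ℓ ∈ Λ_s, a·n_k − b·n_ℓ = c} = O(1), with the implied constant depending only on a, b, r₀, and η. -/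
open Filter

lemma window_card_le (t : Finset ℕ) (K : ℕ)
    (h : ∀ x ∈ t, ∀ y ∈ t, x ≤ y → y - x < K) : t.card ≤ K := by
  rcases t.eq_empty_or_nonempty with rfl | ht
  · simp
  · have h0 : 0 < K := by
      obtain ⟨x, hx⟩ := ht
      have := h x hx x hx le_rfl; omega
    have hsub : t ⊆ Finset.Icc (t.min' ht) (t.min' ht + K - 1) := by
      intro y hy
      have h1 := t.min'_le y hy
      have h2 := h (t.min' ht) (t.min'_mem ht) y hy h1
      simp only [Finset.mem_Icc]
      omega
    calc t.card ≤ (Finset.Icc (t.min' ht) (t.min' ht + K - 1)).card :=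
          Finset.card_le_card hsub
      _ = K := by rw [Nat.card_Icc]; omega

set_option maxHeartbeats 1000000 in
theorem statement7
    (n : ℕ → ℕ) (hn_pos : ∀ k, 1 ≤ n k)
    (η : ℝ) (hη : 1 < η)
    (hlac : ∀ k, η * (n k : ℝ) ≤ (n (k+1) : ℝ))
    (Λ : ℕ → Finset ℕ) (hΛne : ∀ r, (Λ r).Nonempty)
    (hsep : ∀ M : ℝ, 0 < M → ∃ r₀ : ℕ, ∀ r, r₀ ≤ r →
      M * (((Λ r).sup' (hΛne r) n : ℕ) : ℝ) ≤ (((Λ (r+1)).inf' (hΛne (r+1)) n : ℕ) : ℝ))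
    (a b : ℕ) (ha : 1 ≤ a) (hb : 1 ≤ b) :
    ∃ C : ℝ, ∀ c : ℤ, ∀ R : ℕ,
      (∑ r ∈ Finset.range R, ∑ s ∈ Finset.range R,
        if r = s then 0 else
          (((Λ r ×ˢ Λ s).filter
            (fun p => (a : ℤ) * n p.1 - (b : ℤ) * n p.2 = c)).card : ℝ)) ≤ C := by
  classical
  have hη0 : (0:ℝ) < η := lt_trans one_pos hη
  have ha' : (1:ℝ) ≤ (a:ℝ) := by exact_mod_cast ha
  have hb' : (1:ℝ) ≤ (b:ℝ) := by exact_mod_cast hb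
  have haz : (a:ℤ) ≠ 0 := by exact_mod_cast Nat.one_le_iff_ne_zero.mp ha
  have hbz : (b:ℤ) ≠ 0 := by exact_mod_cast Nat.one_le_iff_ne_zero.mp hb
  have hn_pos' : ∀ k, (1:ℝ) ≤ (n k : ℝ) := fun k => by exact_mod_cast hn_pos k
  have hmono : StrictMono n := strictMono_nat_of_lt_succ (fun k => by
    have h1 := hlac k
    have h2 := hn_pos' k
    have h3 : (n k : ℝ) < (n (k+1) : ℝ) := by
      have h4 : (1:ℝ) * (n k : ℝ) < η * (n k : ℝ) :=
        mul_lt_mul_of_pos_right hη (by linarith)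
      rw [one_mul] at h4
      linarith
    exact_mod_cast h3)
  have hinj : Function.Injective n := hmono.injective
  have hgrow : ∀ k d : ℕ, η ^ d * (n k : ℝ) ≤ (n (k + d) : ℝ) := by
    intro k d
    induction d with
    | zero => simp
    | succ d ih =>
      have h1 := hlac (k + d)
      have h2 : η * (η ^ d * (n k:ℝ)) ≤ η * (n (k+d) : ℝ) :=
        mul_le_mul_of_nonneg_left ih (le_of_lt hη0)
      calc η ^ (d+1) * (n k:ℝ) = η * (η ^ d * (n k:ℝ)) := by ring
        _ ≤ η * (n (k+d):ℝ) := h2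
        _ ≤ (n (k+d+1) : ℝ) := h1
        _ = (n (k+(d+1)) : ℝ) := rfl
  set M : ℝ := 2 * ((a:ℝ) + (b:ℝ)) with hM
  have hM4 : (4:ℝ) ≤ M := by rw [hM]; linarith
  have hMpos : (0:ℝ) < M := by linarith
  obtain ⟨r₀, hr₀⟩ := hsep M hMpos
  -- chain lemma
  have hchain : ∀ r s, r₀ ≤ r → r < s →
      M * (((Λ r).sup' (hΛne r) n : ℕ) : ℝ) ≤ (((Λ s).inf' (hΛne s) n : ℕ) : ℝ) := by
    intro r s hr hrs
    induction s with
    | zero => omega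
    | succ s ih =>
      rcases Nat.lt_or_ge r s with h | h
      · have h1 := ih h
        have h2 := hr₀ s (le_trans hr (le_of_lt h))
        obtain ⟨k0, hk0⟩ := hΛne s
        have h3 : (((Λ s).inf' (hΛne s) n : ℕ) : ℝ) ≤ (((Λ s).sup' (hΛne s) n : ℕ) : ℝ) := by
          exact_mod_cast le_trans (Finset.inf'_le n hk0) (Finset.le_sup' n hk0)
        have h5 : (0:ℝ) ≤ (((Λ s).sup' (hΛne s) n : ℕ) : ℝ) := Nat.cast_nonneg _
        have h6 : (0:ℝ) ≤ (M - 1) * (((Λ s).sup' (hΛne s) n : ℕ) : ℝ) :=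
          mul_nonneg (by linarith) h5
        nlinarith [h1, h2, h3, h6]
      · have hsr : s = r := by omega
        subst hsr
        exact hr₀ s hr
  have hgap : ∀ r s k l, r₀ ≤ r → r < s → k ∈ Λ r → l ∈ Λ s →
      M * (n k : ℝ) ≤ (n l : ℝ) := by
    intro r s k l hr hrs hk hl
    have h1 : (n k:ℝ) ≤ (((Λ r).sup' (hΛne r) n : ℕ) : ℝ) := by
      exact_mod_cast Finset.le_sup' n hk
    have h2 : (((Λ s).inf' (hΛne s) n : ℕ) : ℝ) ≤ (n l : ℝ) := by
      exact_mod_cast Finset.inf'_le n hl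
    have h3 := hchain r s hr hrs
    exact le_trans (mul_le_mul_of_nonneg_left h1 hMpos.le) (le_trans h3 h2)
  have hblock : ∀ s s' l, r₀ ≤ s → r₀ ≤ s' → l ∈ Λ s → l ∈ Λ s' → s = s' := by
    intro s s' l hs hs' hl hl'
    have key : ∀ u v, r₀ ≤ u → r₀ ≤ v → l ∈ Λ u → l ∈ Λ v → ¬ u < v := by
      intro u v hu hv hlu hlv huv
      have hg := hgap u v l l hu huv hlu hlv
      have hp := hn_pos' l
      have h6 : (M - 1) * 1 ≤ (M - 1) * (n l : ℝ) :=
        mul_le_mul_of_nonneg_left hp (by linarith)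
      nlinarith [hg, h6]
    have h1 := key s s' hs hs' hl hl'
    have h2 := key s' s hs' hs hl' hl
    omega
  obtain ⟨K, hK⟩ : ∃ K : ℕ, (2:ℝ) < η ^ K := pow_unbounded_of_one_lt 2 hη
  set A : ℕ := ((Finset.range r₀).sigma Λ).card with hA
  refine ⟨((A * (r₀+1) + A * (r₀+1) + K + K : ℕ) : ℝ), fun c R => ?_⟩
  set G : ℕ × ℕ → Finset (ℕ × ℕ) := fun rs =>
    if rs.1 = rs.2 then ∅ else
      (Λ rs.1 ×ˢ Λ rs.2).filter (fun p => (a : ℤ) * n p.1 - (b : ℤ) * n p.2 = c) with hG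
  set T : Finset ((_ : ℕ × ℕ) × ℕ × ℕ) :=
    (Finset.range R ×ˢ Finset.range R).sigma G with hT
  have hmemT : ∀ x ∈ T, x.1.1 ≠ x.1.2 ∧ x.2.1 ∈ Λ x.1.1 ∧ x.2.2 ∈ Λ x.1.2 ∧
      (a : ℤ) * n x.2.1 - (b : ℤ) * n x.2.2 = c := by
    intro x hx
    simp only [hT, Finset.mem_sigma] at hx
    obtain ⟨-, hx2⟩ := hx
    simp only [hG] at hx2
    by_cases h : x.1.1 = x.1.2
    · rw [if_pos h] at hx2; exact absurd hx2 (Finset.notMem_empty _)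
    · rw [if_neg h, Finset.mem_filter, Finset.mem_product] at hx2
      exact ⟨h, hx2.1.1, hx2.1.2, hx2.2⟩
  have hcover : T ⊆ T.filter (fun x => x.1.1 < r₀) ∪ T.filter (fun x => x.1.2 < r₀)
      ∪ T.filter (fun x => r₀ ≤ x.1.1 ∧ r₀ ≤ x.1.2 ∧ x.1.2 < x.1.1)
      ∪ T.filter (fun x => r₀ ≤ x.1.1 ∧ r₀ ≤ x.1.2 ∧ x.1.1 < x.1.2) := by
    intro x hx
    have h := hmemT x hx
    simp only [Finset.mem_union, Finset.mem_filter]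
    have hne := h.1
    by_cases h1 : x.1.1 < r₀
    · exact Or.inl (Or.inl (Or.inl ⟨hx, h1⟩))
    · by_cases h2 : x.1.2 < r₀
      · exact Or.inl (Or.inl (Or.inr ⟨hx, h2⟩))
      · rcases Nat.lt_or_ge x.1.2 x.1.1 with h3 | h3
        · exact Or.inl (Or.inr ⟨hx, by omega, by omega, h3⟩)
        · exact Or.inr ⟨hx, by omega, by omega, by omega⟩
  -- bound TA
  have hTAcard : (T.filter (fun x => x.1.1 < r₀)).card ≤ A * (r₀ + 1) := by
    have hmain := Finset.card_le_card_of_injOn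
      (s := T.filter (fun x => x.1.1 < r₀))
      (t := ((Finset.range r₀).sigma Λ) ×ˢ Finset.range (r₀ + 1))
      (fun x => ((⟨x.1.1, x.2.1⟩ : Σ _ : ℕ, ℕ), min x.1.2 r₀)) ?_ ?_
    · calc (T.filter (fun x => x.1.1 < r₀)).card
          ≤ (((Finset.range r₀).sigma Λ) ×ˢ Finset.range (r₀ + 1)).card := hmain
        _ = A * (r₀ + 1) := by rw [Finset.card_product, hA, Finset.card_range]
    · intro x hx
      have hxT : x ∈ T := Finset.mem_of_mem_filter x hx
      have h := hmemT x hxT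
      have hx' : x.1.1 < r₀ := (Finset.mem_filter.mp hx).2
      simp only [Finset.mem_coe, Finset.mem_product, Finset.mem_sigma, Finset.mem_range]
      exact ⟨⟨hx', h.2.1⟩, by omega⟩
    · intro x hx y hy hxy
      have hxT : x ∈ T := Finset.mem_of_mem_filter x (Finset.mem_coe.mp hx)
      have hyT : y ∈ T := Finset.mem_of_mem_filter y (Finset.mem_coe.mp hy)
      have hX := hmemT x hxT
      have hY := hmemT y hyT
      have h1 : (⟨x.1.1, x.2.1⟩ : Σ _ : ℕ, ℕ) = ⟨y.1.1, y.2.1⟩ := congrArg Prod.fst hxy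
      have hmin : min x.1.2 r₀ = min y.1.2 r₀ := congrArg Prod.snd hxy
      obtain ⟨hr, hkheq⟩ := Sigma.mk.inj_iff.mp h1
      have hk : x.2.1 = y.2.1 := eq_of_heq hkheq
      have hel : x.2.2 = y.2.2 := by
        apply hinj
        have e1 := hX.2.2.2
        have e2 := hY.2.2.2
        rw [hk] at e1
        have hbnl : (b:ℤ) * n x.2.2 = (b:ℤ) * n y.2.2 := by linarith
        exact_mod_cast mul_left_cancel₀ hbz hbnl
      have hs : x.1.2 = y.1.2 := by
        rcases Nat.lt_or_ge x.1.2 r₀ with h | h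
        · omega
        · rcases Nat.lt_or_ge y.1.2 r₀ with h' | h'
          · omega
          · exact hblock x.1.2 y.1.2 x.2.2 h h' hX.2.2.1 (by rw [hel]; exact hY.2.2.1)
      exact Sigma.ext (Prod.ext hr hs) (heq_of_eq (Prod.ext hk hel))
  -- bound TB
  have hTBcard : (T.filter (fun x => x.1.2 < r₀)).card ≤ A * (r₀ + 1) := by
    have hmain := Finset.card_le_card_of_injOn
      (s := T.filter (fun x => x.1.2 < r₀))
      (t := ((Finset.range r₀).sigma Λ) ×ˢ Finset.range (r₀ + 1))
      (fun x => ((⟨x.1.2, x.2.2⟩ : Σ _ : ℕ, ℕ), min x.1.1 r₀)) ?_ ?_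
    · calc (T.filter (fun x => x.1.2 < r₀)).card
          ≤ (((Finset.range r₀).sigma Λ) ×ˢ Finset.range (r₀ + 1)).card := hmain
        _ = A * (r₀ + 1) := by rw [Finset.card_product, hA, Finset.card_range]
    · intro x hx
      have hxT : x ∈ T := Finset.mem_of_mem_filter x hx
      have h := hmemT x hxT
      have hx' : x.1.2 < r₀ := (Finset.mem_filter.mp hx).2
      simp only [Finset.mem_coe, Finset.mem_product, Finset.mem_sigma, Finset.mem_range]
      exact ⟨⟨hx', h.2.2.1⟩, by omega⟩
    · intro x hx y hy hxy
      have hxT : x ∈ T := Finset.mem_of_mem_filter x (Finset.mem_coe.mp hx)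
      have hyT : y ∈ T := Finset.mem_of_mem_filter y (Finset.mem_coe.mp hy)
      have hX := hmemT x hxT
      have hY := hmemT y hyT
      have h1 : (⟨x.1.2, x.2.2⟩ : Σ _ : ℕ, ℕ) = ⟨y.1.2, y.2.2⟩ := congrArg Prod.fst hxy
      have hmin : min x.1.1 r₀ = min y.1.1 r₀ := congrArg Prod.snd hxy
      obtain ⟨hs, hlheq⟩ := Sigma.mk.inj_iff.mp h1
      have hel : x.2.2 = y.2.2 := eq_of_heq hlheq
      have hk : x.2.1 = y.2.1 := by
        apply hinj
        have e1 := hX.2.2.2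
        have e2 := hY.2.2.2
        rw [hel] at e1
        have hanl : (a:ℤ) * n x.2.1 = (a:ℤ) * n y.2.1 := by linarith
        exact_mod_cast mul_left_cancel₀ haz hanl
      have hr : x.1.1 = y.1.1 := by
        rcases Nat.lt_or_ge x.1.1 r₀ with h | h
        · omega
        · rcases Nat.lt_or_ge y.1.1 r₀ with h' | h'
          · omega
          · exact hblock x.1.1 y.1.1 x.2.1 h h' hX.2.1 (by rw [hk]; exact hY.2.1)
      exact Sigma.ext (Prod.ext hr hs) (heq_of_eq (Prod.ext hk hel))
  -- bound TC : r₀ ≤ s < r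
  have hCbound : ∀ x ∈ T.filter (fun x => r₀ ≤ x.1.1 ∧ r₀ ≤ x.1.2 ∧ x.1.2 < x.1.1),
      (a:ℝ) * (n x.2.1 : ℝ) ≤ 2 * (c:ℝ) ∧ (c:ℝ) ≤ (a:ℝ) * (n x.2.1 : ℝ) := by
    intro x hx
    have hxT : x ∈ T := Finset.mem_of_mem_filter x hx
    have h := hmemT x hxT
    have hp := (Finset.mem_filter.mp hx).2
    have hg : M * (n x.2.2 : ℝ) ≤ (n x.2.1 : ℝ) :=
      hgap x.1.2 x.1.1 x.2.2 x.2.1 hp.2.1 hp.2.2 h.2.2.1 h.2.1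
    rw [hM] at hg
    have er : (a:ℝ) * (n x.2.1 : ℝ) - (b:ℝ) * (n x.2.2 : ℝ) = (c:ℝ) := by
      exact_mod_cast h.2.2.2
    have hnk := hn_pos' x.2.1
    have hnl := hn_pos' x.2.2
    have hint1 : (0:ℝ) ≤ ((a:ℝ) - 1) * (n x.2.1 : ℝ) :=
      mul_nonneg (by linarith) (by linarith)
    have hint2 : (0:ℝ) ≤ (2 * (a:ℝ)) * (n x.2.2 : ℝ) :=
      mul_nonneg (by linarith) (by linarith)
    have hg2 : 2 * (b:ℝ) * (n x.2.2 : ℝ) ≤ (n x.2.1 : ℝ) := by nlinarith [hg, hint2]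
    have hint3 : (0:ℝ) ≤ (b:ℝ) * (n x.2.2 : ℝ) :=
      mul_nonneg (by linarith) (by linarith)
    constructor
    · nlinarith [hg2, hint1, er]
    · linarith [er, hint3]
  have hTCcard : (T.filter (fun x => r₀ ≤ x.1.1 ∧ r₀ ≤ x.1.2 ∧ x.1.2 < x.1.1)).card ≤ K := by
    have hinjC : Set.InjOn (fun x => x.2.1)
        ((T.filter (fun x => r₀ ≤ x.1.1 ∧ r₀ ≤ x.1.2 ∧ x.1.2 < x.1.1)) :
          Set ((_ : ℕ × ℕ) × ℕ × ℕ)) := by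
      intro x hx y hy hxy
      have hxTC := Finset.mem_coe.mp hx
      have hyTC := Finset.mem_coe.mp hy
      have hxT : x ∈ T := Finset.mem_of_mem_filter x hxTC
      have hyT : y ∈ T := Finset.mem_of_mem_filter y hyTC
      have hX := hmemT x hxT
      have hY := hmemT y hyT
      have hpx := (Finset.mem_filter.mp hxTC).2
      have hpy := (Finset.mem_filter.mp hyTC).2
      have hk : x.2.1 = y.2.1 := hxy
      have hel : x.2.2 = y.2.2 := by
        apply hinj
        have e1 := hX.2.2.2
        have e2 := hY.2.2.2
        rw [hk] at e1
        have hbnl : (b:ℤ) * n x.2.2 = (b:ℤ) * n y.2.2 := by linarith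
        exact_mod_cast mul_left_cancel₀ hbz hbnl
      have hr : x.1.1 = y.1.1 :=
        hblock x.1.1 y.1.1 x.2.1 hpx.1 hpy.1 hX.2.1 (by rw [hk]; exact hY.2.1)
      have hs : x.1.2 = y.1.2 :=
        hblock x.1.2 y.1.2 x.2.2 hpx.2.1 hpy.2.1 hX.2.2.1 (by rw [hel]; exact hY.2.2.1)
      exact Sigma.ext (Prod.ext hr hs) (heq_of_eq (Prod.ext hk hel))
    rw [← Finset.card_image_of_injOn hinjC]
    apply window_card_le
    intro u hu v hv huv
    simp only [Finset.mem_image] at hu hv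
    obtain ⟨x, hx, rfl⟩ := hu
    obtain ⟨y, hy, rfl⟩ := hv
    have hbx := hCbound x hx
    have hby := hCbound y hy
    have hnu := hn_pos' x.2.1
    have ha0 : (0:ℝ) < (a:ℝ) := by linarith
    have h2 : (n y.2.1 : ℝ) ≤ 2 * (n x.2.1 : ℝ) := by
      have h2' : (a:ℝ) * (n y.2.1 : ℝ) ≤ (a:ℝ) * (2 * (n x.2.1 : ℝ)) := by
        rw [show (a:ℝ) * (2 * (n x.2.1 : ℝ)) = 2 * ((a:ℝ) * (n x.2.1 : ℝ)) by ring]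
        linarith [hby.1, hbx.2]
      exact le_of_mul_le_mul_left h2' ha0
    have hgr := hgrow x.2.1 (y.2.1 - x.2.1)
    rw [show x.2.1 + (y.2.1 - x.2.1) = y.2.1 by omega] at hgr
    have hpow : η ^ (y.2.1 - x.2.1) ≤ 2 := by
      have h3 : η ^ (y.2.1 - x.2.1) * (n x.2.1 : ℝ) ≤ 2 * (n x.2.1 : ℝ) :=
        le_trans hgr h2
      exact le_of_mul_le_mul_right h3 (by linarith)
    exact (pow_lt_pow_iff_right₀ hη).mp (lt_of_le_of_lt hpow hK)
  -- bound TD : r₀ ≤ r < s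
  have hDbound : ∀ x ∈ T.filter (fun x => r₀ ≤ x.1.1 ∧ r₀ ≤ x.1.2 ∧ x.1.1 < x.1.2),
      (b:ℝ) * (n x.2.2 : ℝ) ≤ 2 * (-(c:ℝ)) ∧ -(c:ℝ) ≤ (b:ℝ) * (n x.2.2 : ℝ) := by
    intro x hx
    have hxT : x ∈ T := Finset.mem_of_mem_filter x hx
    have h := hmemT x hxT
    have hp := (Finset.mem_filter.mp hx).2
    have hg : M * (n x.2.1 : ℝ) ≤ (n x.2.2 : ℝ) :=
      hgap x.1.1 x.1.2 x.2.1 x.2.2 hp.1 hp.2.2 h.2.1 h.2.2.1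
    rw [hM] at hg
    have er : (a:ℝ) * (n x.2.1 : ℝ) - (b:ℝ) * (n x.2.2 : ℝ) = (c:ℝ) := by
      exact_mod_cast h.2.2.2
    have hnk := hn_pos' x.2.1
    have hnl := hn_pos' x.2.2
    have hint1 : (0:ℝ) ≤ ((b:ℝ) - 1) * (n x.2.2 : ℝ) :=
      mul_nonneg (by linarith) (by linarith)
    have hint2 : (0:ℝ) ≤ (2 * (b:ℝ)) * (n x.2.1 : ℝ) :=
      mul_nonneg (by linarith) (by linarith)
    have hg2 : 2 * (a:ℝ) * (n x.2.1 : ℝ) ≤ (n x.2.2 : ℝ) := by nlinarith [hg, hint2]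
    have hint3 : (0:ℝ) ≤ (a:ℝ) * (n x.2.1 : ℝ) :=
      mul_nonneg (by linarith) (by linarith)
    constructor
    · nlinarith [hg2, hint1, er]
    · linarith [er, hint3]
  have hTDcard : (T.filter (fun x => r₀ ≤ x.1.1 ∧ r₀ ≤ x.1.2 ∧ x.1.1 < x.1.2)).card ≤ K := by
    have hinjD : Set.InjOn (fun x => x.2.2)
        ((T.filter (fun x => r₀ ≤ x.1.1 ∧ r₀ ≤ x.1.2 ∧ x.1.1 < x.1.2)) :
          Set ((_ : ℕ × ℕ) × ℕ × ℕ)) := by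
      intro x hx y hy hxy
      have hxTD := Finset.mem_coe.mp hx
      have hyTD := Finset.mem_coe.mp hy
      have hxT : x ∈ T := Finset.mem_of_mem_filter x hxTD
      have hyT : y ∈ T := Finset.mem_of_mem_filter y hyTD
      have hX := hmemT x hxT
      have hY := hmemT y hyT
      have hpx := (Finset.mem_filter.mp hxTD).2
      have hpy := (Finset.mem_filter.mp hyTD).2
      have hel : x.2.2 = y.2.2 := hxy
      have hk : x.2.1 = y.2.1 := by
        apply hinj
        have e1 := hX.2.2.2
        have e2 := hY.2.2.2
        rw [hel] at e1
        have hanl : (a:ℤ) * n x.2.1 = (a:ℤ) * n y.2.1 := by linarith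
        exact_mod_cast mul_left_cancel₀ haz hanl
      have hr : x.1.1 = y.1.1 :=
        hblock x.1.1 y.1.1 x.2.1 hpx.1 hpy.1 hX.2.1 (by rw [hk]; exact hY.2.1)
      have hs : x.1.2 = y.1.2 :=
        hblock x.1.2 y.1.2 x.2.2 hpx.2.1 hpy.2.1 hX.2.2.1 (by rw [hel]; exact hY.2.2.1)
      exact Sigma.ext (Prod.ext hr hs) (heq_of_eq (Prod.ext hk hel))
    rw [← Finset.card_image_of_injOn hinjD]
    apply window_card_le
    intro u hu v hv huv
    simp only [Finset.mem_image] at hu hv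
    obtain ⟨x, hx, rfl⟩ := hu
    obtain ⟨y, hy, rfl⟩ := hv
    have hbx := hDbound x hx
    have hby := hDbound y hy
    have hnu := hn_pos' x.2.2
    have hb0 : (0:ℝ) < (b:ℝ) := by linarith
    have h2 : (n y.2.2 : ℝ) ≤ 2 * (n x.2.2 : ℝ) := by
      have h2' : (b:ℝ) * (n y.2.2 : ℝ) ≤ (b:ℝ) * (2 * (n x.2.2 : ℝ)) := by
        rw [show (b:ℝ) * (2 * (n x.2.2 : ℝ)) = 2 * ((b:ℝ) * (n x.2.2 : ℝ)) by ring]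
        linarith [hby.1, hbx.2]
      exact le_of_mul_le_mul_left h2' hb0
    have hgr := hgrow x.2.2 (y.2.2 - x.2.2)
    rw [show x.2.2 + (y.2.2 - x.2.2) = y.2.2 by omega] at hgr
    have hpow : η ^ (y.2.2 - x.2.2) ≤ 2 := by
      have h3 : η ^ (y.2.2 - x.2.2) * (n x.2.2 : ℝ) ≤ 2 * (n x.2.2 : ℝ) :=
        le_trans hgr h2
      exact le_of_mul_le_mul_right h3 (by linarith)
    exact (pow_lt_pow_iff_right₀ hη).mp (lt_of_le_of_lt hpow hK)
  -- assemble
  have hTcard : T.card ≤ A * (r₀+1) + A * (r₀+1) + K + K := by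
    have hu1 := Finset.card_le_card hcover
    have hu2 := Finset.card_union_le
      (T.filter (fun x => x.1.1 < r₀) ∪ T.filter (fun x => x.1.2 < r₀)
        ∪ T.filter (fun x => r₀ ≤ x.1.1 ∧ r₀ ≤ x.1.2 ∧ x.1.2 < x.1.1))
      (T.filter (fun x => r₀ ≤ x.1.1 ∧ r₀ ≤ x.1.2 ∧ x.1.1 < x.1.2))
    have hu3 := Finset.card_union_le
      (T.filter (fun x => x.1.1 < r₀) ∪ T.filter (fun x => x.1.2 < r₀))
      (T.filter (fun x => r₀ ≤ x.1.1 ∧ r₀ ≤ x.1.2 ∧ x.1.2 < x.1.1))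
    have hu4 := Finset.card_union_le
      (T.filter (fun x => x.1.1 < r₀)) (T.filter (fun x => x.1.2 < r₀))
    omega
  have key : ∀ r s : ℕ, (if r = s then (0:ℝ) else
      (((Λ r ×ˢ Λ s).filter
        (fun p => (a : ℤ) * n p.1 - (b : ℤ) * n p.2 = c)).card : ℝ))
      = ((G (r, s)).card : ℝ) := by
    intro r s
    by_cases h : r = s
    · simp [hG, h]
    · simp [hG, h]
  calc (∑ r ∈ Finset.range R, ∑ s ∈ Finset.range R,
        if r = s then 0 else
          (((Λ r ×ˢ Λ s).filter
            (fun p => (a : ℤ) * n p.1 - (b : ℤ) * n p.2 = c)).card : ℝ))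
      = ∑ r ∈ Finset.range R, ∑ s ∈ Finset.range R, ((G (r, s)).card : ℝ) := by
        apply Finset.sum_congr rfl; intro r _
        apply Finset.sum_congr rfl; intro s _
        exact key r s
    _ = (T.card : ℝ) := by
        rw [hT, Finset.card_sigma, Finset.sum_product]
        push_cast
        rfl
    _ ≤ ((A * (r₀+1) + A * (r₀+1) + K + K : ℕ) : ℝ) := by exact_mod_cast hTcard
end

section
/- For the constructed sequence (n_k)_{k≥1}, let a, b be positive integers with a = 2^r·b for some integer r ≥ 1. Then there is a constant C (depending on a and b only) such that for every integer c, Σ_{i≥1} Σ_{m=1}^{M(i)} #{(k,ℓ) : k, ℓ ∈ Δ_i^{(m)}, k + r ≠ ℓ, a·n_k − b·n_ℓ = c} ≤ C. -/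
open Filter

private lemma stmt13.L1 : ∀ i : ℕ, 2 ≤ i → 3^(i+1) ≤ 2^(3^i - 1) := by
  intro i hi
  induction i with
  | zero => omega
  | succ j ih =>
    rcases Nat.lt_or_ge j 2 with hj | hj
    · interval_cases j
      · omega
      · norm_num
    · have h1 := ih hj
      have h3 : (3:ℕ) * 3^(j+1) ≤ 4 * 2^(3^j - 1) := by
        have := Nat.mul_le_mul_left 3 h1
        omega
      have h4 : (4:ℕ) * 2^(3^j - 1) = 2^(3^j + 1) := by
        have hj1 : 1 ≤ 3^j := Nat.one_le_pow _ _ (by norm_num)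
        have he : 3^j + 1 = (3^j - 1) + 2 := by omega
        rw [he, pow_add]
        ring
      have h5 : (2:ℕ)^(3^j + 1) ≤ 2^(3^(j+1) - 1) := by
        apply Nat.pow_le_pow_right (by norm_num)
        have he : 3^(j+1) = 3 * 3^j := by ring
        have hj1 : 1 ≤ 3^j := Nat.one_le_pow _ _ (by norm_num)
        omega
      have h2 : (3:ℕ)^(j+1+1) = 3 * 3^(j+1) := by ring
      omega

private lemma stmt13.Laux : ∀ i : ℕ, 1 ≤ i → 2*i + 2 ≤ 2^(2^i) := by
  intro i hi
  induction i with
  | zero => omega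
  | succ j ih =>
    rcases Nat.eq_zero_or_pos j with hj | hj
    · subst hj; norm_num
    · have h1 := ih hj
      have h2 : 2^(2^(j+1)) = (2^(2^j))^2 := by
        rw [← pow_mul, ← pow_succ]
      have h3 : 4 ≤ 2^(2^j) := by
        have h4 : (2:ℕ)^2 ≤ 2^(2^j) := by
          apply Nat.pow_le_pow_right (by norm_num)
          have : (2:ℕ)^1 ≤ 2^j := Nat.pow_le_pow_right (by norm_num) hj
          simpa using this
        simpa using h4
      nlinarith

private lemma stmt13.L2 : ∀ i : ℕ, 1 ≤ i → 2^(2^(2^i)) + 3^(i+1) ≤ 2^(2^(2^(i+1))) := by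
  intro i hi
  have h1 : (3:ℕ)^(i+1) ≤ 4^(i+1) := Nat.pow_le_pow_left (by norm_num) _
  have h2 : (4:ℕ)^(i+1) = 2^(2*i+2) := by
    rw [show (4:ℕ) = 2^2 by norm_num, ← pow_mul, show 2*(i+1) = 2*i+2 from by ring]
  have hia : 2*i+2 ≤ 2^(2^i) := by
    have ha := stmt13.Laux i hi
    have hb : 2^i ≤ 2^(2^i) := Nat.pow_le_pow_right (by norm_num) (Nat.lt_two_pow_self (n := i)).le
    omega
  have h3 : (2:ℕ)^(2*i+2) ≤ 2^(2^(2^i)) := Nat.pow_le_pow_right (by norm_num) hia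
  have h5 : 2^(2^(2^i)) + 3^(i+1) ≤ 2 * 2^(2^(2^i)) := by omega
  have h6 : (2:ℕ) * 2^(2^(2^i)) = 2^(2^(2^i) + 1) := by rw [pow_succ]; ring
  have h7 : (2:ℕ)^(2^(2^i) + 1) ≤ 2^(2^(2^(i+1))) := by
    apply Nat.pow_le_pow_right (by norm_num)
    have h8 : 2^(2^(i+1)) = (2^(2^i))^2 := by
      rw [← pow_mul, ← pow_succ]
    have h9 : 2 ≤ 2^(2^i) := by
      have : (2:ℕ)^1 ≤ 2^(2^i) := Nat.pow_le_pow_right (by norm_num) Nat.one_le_two_pow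
      simpa using this
    nlinarith
  omega

private lemma stmt13.L3 {i j : ℕ} (h : i ≤ j) : 2^(2^(2^i)) ≤ 2^(2^(2^j)) :=
  Nat.pow_le_pow_right (by norm_num) (Nat.pow_le_pow_right (by norm_num)
    (Nat.pow_le_pow_right (by norm_num) h))

private lemma stmt13.two_pow_inj {u v : ℕ} (h : (2:ℕ)^u = 2^v) : u = v :=
  Nat.pow_right_injective (le_refl 2) h

private lemma stmt13.L5aux : ∀ N : ℕ, ∀ u v u' v' : ℕ, u + v ≤ N → 2^u + 2^v = 2^u' + 2^v' →
    (u = u' ∧ v = v') ∨ (u = v' ∧ v = u') := by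
  intro N
  induction N with
  | zero =>
    intro u v u' v' hle h
    have hu : u = 0 := by omega
    have hv : v = 0 := by omega
    subst hu; subst hv
    simp only [pow_zero] at h
    have h1 : (1:ℕ) ≤ 2^u' := Nat.one_le_two_pow
    have h2 : (1:ℕ) ≤ 2^v' := Nat.one_le_two_pow
    have hu' : 2^u' = 1 := by omega
    have hv' : 2^v' = 1 := by omega
    have : u' = 0 := stmt13.two_pow_inj (v := 0) (by simpa using hu')
    have : v' = 0 := stmt13.two_pow_inj (v := 0) (by simpa using hv')
    omega
  | succ N ih =>
    intro u v u' v' hle h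
    rcases Nat.eq_zero_or_pos u with hu | hu
    · rcases Nat.eq_zero_or_pos v with hv | hv
      · subst hu; subst hv
        simp only [pow_zero] at h
        have h1 : (1:ℕ) ≤ 2^u' := Nat.one_le_two_pow
        have h2 : (1:ℕ) ≤ 2^v' := Nat.one_le_two_pow
        have hu' : 2^u' = 1 := by omega
        have hv' : 2^v' = 1 := by omega
        have : u' = 0 := stmt13.two_pow_inj (v := 0) (by simpa using hu')
        have : v' = 0 := stmt13.two_pow_inj (v := 0) (by simpa using hv')
        omega
      · subst hu
        simp only [pow_zero] at h
        have hvE : 2 ∣ 2^v := dvd_pow_self 2 (by omega)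
        rcases Nat.eq_zero_or_pos u' with hu' | hu'
        · subst hu'
          simp only [pow_zero] at h
          have : (2:ℕ)^v = 2^v' := by omega
          left
          exact ⟨rfl, stmt13.two_pow_inj this⟩
        · rcases Nat.eq_zero_or_pos v' with hv' | hv'
          · subst hv'
            simp only [pow_zero] at h
            have : (2:ℕ)^v = 2^u' := by omega
            right
            exact ⟨rfl, stmt13.two_pow_inj this⟩
          · exfalso
            have h1 : 2 ∣ 2^u' := dvd_pow_self 2 (by omega)
            have h2 : 2 ∣ 2^v' := dvd_pow_self 2 (by omega)
            omega
    · rcases Nat.eq_zero_or_pos v with hv | hv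
      · subst hv
        simp only [pow_zero] at h
        have hvE : 2 ∣ 2^u := dvd_pow_self 2 (by omega)
        rcases Nat.eq_zero_or_pos u' with hu' | hu'
        · subst hu'
          simp only [pow_zero] at h
          have : (2:ℕ)^u = 2^v' := by omega
          right
          exact ⟨stmt13.two_pow_inj this, rfl⟩
        · rcases Nat.eq_zero_or_pos v' with hv' | hv'
          · subst hv'
            simp only [pow_zero] at h
            have : (2:ℕ)^u = 2^u' := by omega
            left
            exact ⟨stmt13.two_pow_inj this, rfl⟩
          · exfalso
            have h1 : 2 ∣ 2^u' := dvd_pow_self 2 (by omega)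
            have h2 : 2 ∣ 2^v' := dvd_pow_self 2 (by omega)
            omega
      · have hLHS : 4 ≤ 2^u + 2^v := by
          have h1 : (2:ℕ)^1 ≤ 2^u := Nat.pow_le_pow_right (by norm_num) hu
          have h2 : (2:ℕ)^1 ≤ 2^v := Nat.pow_le_pow_right (by norm_num) hv
          simp at h1 h2; omega
        rcases Nat.eq_zero_or_pos u' with hu' | hu'
        · rcases Nat.eq_zero_or_pos v' with hv' | hv'
          · exfalso; subst hu'; subst hv'; simp at h; omega
          · exfalso
            subst hu'
            have h2 : 2 ∣ 2^v' := dvd_pow_self 2 (by omega)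
            have h3 : 2 ∣ 2^u := dvd_pow_self 2 (by omega)
            have h4 : 2 ∣ 2^v := dvd_pow_self 2 (by omega)
            simp only [pow_zero] at h
            omega
        · rcases Nat.eq_zero_or_pos v' with hv' | hv'
          · exfalso
            subst hv'
            have h2 : 2 ∣ 2^u' := dvd_pow_self 2 (by omega)
            have h3 : 2 ∣ 2^u := dvd_pow_self 2 (by omega)
            have h4 : 2 ∣ 2^v := dvd_pow_self 2 (by omega)
            simp only [pow_zero] at h
            omega
          · obtain ⟨u1, rfl⟩ : ∃ u1, u = u1 + 1 := ⟨u - 1, by omega⟩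
            obtain ⟨v1, rfl⟩ : ∃ v1, v = v1 + 1 := ⟨v - 1, by omega⟩
            obtain ⟨u1', rfl⟩ : ∃ w, u' = w + 1 := ⟨u' - 1, by omega⟩
            obtain ⟨v1', rfl⟩ : ∃ w, v' = w + 1 := ⟨v' - 1, by omega⟩
            have h' : 2^u1 + 2^v1 = 2^u1' + 2^v1' := by
              have : 2*(2^u1 + 2^v1) = 2*(2^u1' + 2^v1') := by
                simpa [pow_succ, mul_comm, mul_add] using h
              omega
            rcases ih u1 v1 u1' v1' (by omega) h' with ⟨h1, h2⟩ | ⟨h1, h2⟩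
            · left; omega
            · right; omega

private lemma stmt13.L5 {u v u' v' : ℕ} (h : 2^u + 2^v = 2^u' + 2^v') :
    (u = u' ∧ v = v') ∨ (u = v' ∧ v = u') :=
  stmt13.L5aux (u+v) u v u' v' (le_refl _) h

private lemma stmt13.even_two_pow {r : ℕ} (hr : 1 ≤ r) : Even ((2:ℤ)^r) := by
  rcases Nat.exists_eq_add_of_le hr with ⟨j, rfl⟩
  exact ⟨2^j, by rw [pow_add]; ring⟩

private lemma stmt13.odd_not_two_dvd {x : ℤ} (h : Odd x) : ¬ 2 ∣ x := by
  rcases h with ⟨j, hj⟩; intro ⟨y, hy⟩; omega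

private lemma stmt13.odd_decomp (r i m k ℓ : ℕ) (hr : 1 ≤ r) (hi : 2 ≤ i)
    (hm1 : 1 ≤ m) (hm2 : m ≤ 2^(3^(i+1)-1))
    (hk : 2^(3^i-1) ≤ k) (hl : 2^(3^i-1) ≤ ℓ) :
    ∃ s O, s + 1 ≤ 3^(i+1) ∧ ¬ (2:ℤ) ∣ O ∧
      (2:ℤ)^(k + r + i*m) - 2^(ℓ + i*m) + (2^r - 1) * m = 2^s * O := by
  obtain ⟨s, t, ht, hmst⟩ :=
    Nat.exists_eq_pow_mul_and_not_dvd (show m ≠ 0 by omega) 2 (by norm_num)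
  have ht1 : 1 ≤ t := by
    rcases Nat.eq_zero_or_pos t with h0 | h0
    · exfalso; omega
    · exact h0
  have hs2 : 2^s ≤ 2^(3^(i+1)-1) := by
    calc (2:ℕ)^s ≤ 2^s * t := Nat.le_mul_of_pos_right _ ht1
    _ = m := hmst.symm
    _ ≤ _ := hm2
  have hsle : s ≤ 3^(i+1) - 1 := (Nat.pow_le_pow_iff_right (by norm_num)).mp hs2
  have h31 : 1 ≤ 3^(i+1) := Nat.one_le_pow _ _ (by norm_num)
  have hsB : s + 1 ≤ 3^(i+1) := by omega
  have hL1 := stmt13.L1 i hi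
  have hsu : s + 1 ≤ k + r + i*m := by
    have : 3^(i+1) ≤ k := le_trans hL1 hk
    omega
  have hsv : s + 1 ≤ ℓ + i*m := by
    have : 3^(i+1) ≤ ℓ := le_trans hL1 hl
    omega
  refine ⟨s, 2^(k + r + i*m - s) - 2^(ℓ + i*m - s) + (2^r - 1) * t, hsB, ?_, ?_⟩
  · apply stmt13.odd_not_two_dvd
    apply Even.add_odd
    · apply Even.sub
      · exact stmt13.even_two_pow (by omega)
      · exact stmt13.even_two_pow (by omega)
    · apply Odd.mul
      · exact Even.sub_odd (stmt13.even_two_pow hr) odd_one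
      · rw [Int.odd_coe_nat]; exact Nat.odd_iff.mpr (by omega)
  · have e1 : (2:ℤ)^(k + r + i*m) = 2^s * 2^(k + r + i*m - s) := by
      rw [← pow_add]
      congr 1
      omega
    have e2 : (2:ℤ)^(ℓ + i*m) = 2^s * 2^(ℓ + i*m - s) := by
      rw [← pow_add]
      congr 1
      omega
    have e3 : (m:ℤ) = 2^s * t := by
      rw [hmst]; push_cast; ring
    rw [e1, e2, e3]; ring

private lemma stmt13.cross_block {b : ℕ} (hb : 1 ≤ b) {e1 e2 : ℕ} {O O' : ℤ}
    (hO : ¬ (2:ℤ) ∣ O) (h12 : e1 < e2)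
    (h : (b:ℤ) * 2^e1 * O = (b:ℤ) * 2^e2 * O') : False := by
  have hb0 : (b:ℤ) ≠ 0 := by positivity
  have h2 : (2:ℤ)^e2 = 2^e1 * 2^(e2-e1) := by
    rw [← pow_add]; congr 1; omega
  rw [h2] at h
  have hcan : O = 2^(e2-e1) * O' := by
    have h20 : ((2:ℤ)^e1) ≠ 0 := by positivity
    have hh : (b:ℤ) * 2^e1 * O = (b:ℤ) * 2^e1 * (2^(e2-e1) * O') := by linarith [h]
    exact mul_left_cancel₀ (mul_ne_zero hb0 h20) hh
  apply hO
  rw [hcan]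
  exact (dvd_pow_self 2 (show e2 - e1 ≠ 0 by omega)).mul_right _

private lemma stmt13.within_block (r i : ℕ) (hr : 1 ≤ r) (hi : r + 3 ≤ i)
    (M : ℕ) (hMle : M ≤ 2^(3^(i+1)-1))
    (m m' k ℓ k' ℓ' : ℕ)
    (hm1 : 1 ≤ m) (hm2 : m ≤ M) (hm1' : 1 ≤ m') (hm2' : m' ≤ M)
    (hk : 2^(3^i-1) ≤ k) (hl : 2^(3^i-1) ≤ ℓ)
    (hk' : 2^(3^i-1) ≤ k') (hl' : 2^(3^i-1) ≤ ℓ')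
    (hne : k + r ≠ ℓ)
    (hD : (2:ℤ)^(k+r+i*m) - 2^(ℓ+i*m) + (2^r-1)*m
        = (2:ℤ)^(k'+r+i*m') - 2^(ℓ'+i*m') + (2^r-1)*m') :
    m = m' ∧ k = k' ∧ ℓ = ℓ' := by
  have hi2 : 2 ≤ i := by omega
  have hL1 := stmt13.L1 i hi2
  set W : ℕ := 2^(3^i-1) + i with hW
  have him : i ≤ i*m := Nat.le_mul_of_pos_right i hm1
  have him' : i ≤ i*m' := Nat.le_mul_of_pos_right i hm1'
  have hu : W ≤ k + r + i*m := by omega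
  have hv : W ≤ ℓ + i*m := by omega
  have hu' : W ≤ k' + r + i*m' := by omega
  have hv' : W ≤ ℓ' + i*m' := by omega
  have hmm : m = m' := by
    by_contra hmm
    have hre : (2:ℤ)^(k+r+i*m) - 2^(ℓ+i*m) - 2^(k'+r+i*m') + 2^(ℓ'+i*m')
        = (2^r - 1) * ((m':ℤ) - m) := by linarith [hD]
    have hdvd : (2:ℤ)^W ∣ ((2:ℤ)^r - 1) * ((m':ℤ) - m) := by
      rw [← hre]
      have d1 : (2:ℤ)^W ∣ 2^(k+r+i*m) := pow_dvd_pow 2 hu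
      have d2 : (2:ℤ)^W ∣ 2^(ℓ+i*m) := pow_dvd_pow 2 hv
      have d3 : (2:ℤ)^W ∣ 2^(k'+r+i*m') := pow_dvd_pow 2 hu'
      have d4 : (2:ℤ)^W ∣ 2^(ℓ'+i*m') := pow_dvd_pow 2 hv'
      exact dvd_add (dvd_sub (dvd_sub d1 d2) d3) d4
    have hr1 : (1:ℤ) ≤ 2^r - 1 := by
      have h2r : (2:ℤ)^1 ≤ 2^r := pow_le_pow_right₀ (by norm_num) hr
      simp at h2r
      linarith
    have hmz : (1:ℤ) ≤ (m:ℤ) := by exact_mod_cast hm1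
    have hmz' : (1:ℤ) ≤ (m':ℤ) := by exact_mod_cast hm1'
    have hMz : (m:ℤ) ≤ M := by exact_mod_cast hm2
    have hMz' : (m':ℤ) ≤ M := by exact_mod_cast hm2'
    have hMzz : (M:ℤ) ≤ (2:ℤ)^(3^(i+1)-1) := by exact_mod_cast hMle
    have hdne : ((m':ℤ) - m) ≠ 0 := by
      intro h0
      apply hmm
      have : (m:ℤ) = m' := by linarith
      exact_mod_cast this
    have hRne : ((2:ℤ)^r - 1) * ((m':ℤ) - m) ≠ 0 :=
      mul_ne_zero (by linarith) hdne
    have hle := Int.le_of_dvd (abs_pos.mpr hRne) ((dvd_abs _ _).mpr hdvd)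
    have habs : |((2:ℤ)^r - 1) * ((m':ℤ) - m)| = ((2:ℤ)^r - 1) * |(m':ℤ) - m| := by
      rw [abs_mul, abs_of_nonneg (by linarith : (0:ℤ) ≤ 2^r - 1)]
    have hmabs : |(m':ℤ) - m| ≤ (2:ℤ)^(3^(i+1)-1) := by
      rw [abs_le]
      constructor <;> linarith
    have hbound : ((2:ℤ)^r - 1) * |(m':ℤ) - m| < 2^W := by
      have habs0 : (0:ℤ) ≤ |(m':ℤ) - m| := abs_nonneg _
      have h1 : ((2:ℤ)^r - 1) * |(m':ℤ) - m| ≤ ((2:ℤ)^r - 1) * 2^(3^(i+1)-1) :=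
        mul_le_mul_of_nonneg_left hmabs (by linarith)
      have hp0 : (0:ℤ) < 2^(3^(i+1)-1) := by positivity
      have h2 : ((2:ℤ)^r - 1) * 2^(3^(i+1)-1) < 2^r * 2^(3^(i+1)-1) := by
        apply mul_lt_mul_of_pos_right _ hp0
        linarith
      have h3 : (2:ℤ)^r * 2^(3^(i+1)-1) = 2^(r + (3^(i+1)-1)) :=
        (pow_add (2:ℤ) r (3^(i+1)-1)).symm
      have h4 : (2:ℤ)^(r + (3^(i+1)-1)) ≤ 2^W := by
        apply pow_le_pow_right₀ (by norm_num)
        have h31 : 1 ≤ 3^(i+1) := Nat.one_le_pow _ _ (by norm_num)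
        omega
      calc ((2:ℤ)^r - 1) * |(m':ℤ) - m| ≤ ((2:ℤ)^r - 1) * 2^(3^(i+1)-1) := h1
      _ < 2^r * 2^(3^(i+1)-1) := h2
      _ = 2^(r + (3^(i+1)-1)) := h3
      _ ≤ 2^W := h4
    rw [habs] at hle
    linarith
  subst hmm
  have hD2 : (2:ℤ)^(k+r+i*m) + 2^(ℓ'+i*m) = 2^(k'+r+i*m) + 2^(ℓ+i*m) := by linarith [hD]
  have hD3 : 2^(k+r+i*m) + 2^(ℓ'+i*m) = 2^(k'+r+i*m) + 2^(ℓ+i*m) := by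
    have hc : ((2^(k+r+i*m) + 2^(ℓ'+i*m) : ℕ) : ℤ)
        = ((2^(k'+r+i*m) + 2^(ℓ+i*m) : ℕ) : ℤ) := by
      push_cast
      linarith [hD2]
    exact_mod_cast hc
  rcases stmt13.L5 hD3 with ⟨h1, h2⟩ | ⟨h1, h2⟩
  · exact ⟨rfl, by omega, by omega⟩
  · exact absurd (by omega : k + r = ℓ) hne

theorem statement13
    (g : ℕ → ℝ)
    (hg_bounds : ∀ N : ℕ, 1 ≤ N → 1 ≤ g N ∧ g N ≤ N)
    (hg_mono : ∀ N : ℕ, 1 ≤ N → g N ≤ g (N+1))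
    (hg_ratio_mono : ∀ N : ℕ, 1 ≤ N → (N : ℝ) / g N ≤ ((N:ℝ)+1) / g (N+1))
    (hg_top : Tendsto g atTop atTop)
    (hg_ratio_top : Tendsto (fun N : ℕ => (N : ℝ) / g N) atTop atTop)
    (blk : ℕ → ℕ → Finset ℕ)
    (hcover : ∀ i k, k ∈ Blk i ↔ ∃ m, m ∈ Finset.Icc 1 (Mblk g i) ∧ k ∈ blk i m)
    (hdisj : ∀ i m m', m ≠ m' → Disjoint (blk i m) (blk i m'))
    (hconsec : ∀ i m m', m < m' → ∀ k ∈ blk i m, ∀ k' ∈ blk i m', k < k')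
    (hcard : ∀ i, ∀ m ∈ Finset.Icc 1 (Mblk g i), ∀ m' ∈ Finset.Icc 1 (Mblk g i),
      (blk i m).card ≤ (blk i m').card + 1)
    (n : ℕ → ℕ)
    (hn : ∀ i, ∀ m ∈ Finset.Icc 1 (Mblk g i), ∀ k ∈ blk i m,
      n k = 2^(2^(2^(2^i))) * (2^(k + i*m) + m))
    (a b r : ℕ) (hb : 1 ≤ b) (hr : 1 ≤ r) (hab : a = 2^r * b) :
    ∃ C : ℕ, ∀ c : ℤ, ∀ I : ℕ,
      (∑ i ∈ Finset.Icc 1 I, ∑ m ∈ Finset.Icc 1 (Mblk g i),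
        ((blk i m ×ˢ blk i m).filter
          (fun p => p.1 + r ≠ p.2 ∧ (a : ℤ) * n p.1 - (b : ℤ) * n p.2 = c)).card) ≤ C := by
  -- basic facts
  have hMle : ∀ i : ℕ, Mblk g i ≤ 2^(3^(i+1)-1) := by
    intro i
    have hlt : (2:ℕ)^(3^i - 1) < 2^(3^(i+1) - 1) := by
      apply Nat.pow_lt_pow_right (by norm_num)
      have h1 : (3:ℕ)^i < 3^(i+1) := Nat.pow_lt_pow_right (by norm_num) (Nat.lt_succ_self i)
      have h2 : 1 ≤ (3:ℕ)^i := Nat.one_le_pow _ _ (by norm_num)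
      omega
    have hcardB : (Blk i).card = 2^(3^(i+1) - 1) - 2^(3^i - 1) := by
      rw [Blk, Nat.card_Ico]
    have hN1 : 1 ≤ (Blk i).card := by omega
    have hceil : Mblk g i ≤ (Blk i).card := by
      rw [Mblk]
      exact Nat.ceil_le.mpr (hg_bounds _ hN1).2
    exact hceil.trans (by rw [hcardB]; exact Nat.sub_le _ _)
  have hrange : ∀ i m k, m ∈ Finset.Icc 1 (Mblk g i) → k ∈ blk i m →
      2^(3^i-1) ≤ k ∧ k < 2^(3^(i+1)-1) := by
    intro i m k hm hk
    have : k ∈ Blk i := (hcover i k).mpr ⟨m, hm, hk⟩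
    simpa [Blk, Finset.mem_Ico] using this
  have hexp : ∀ i m k ℓ, m ∈ Finset.Icc 1 (Mblk g i) → k ∈ blk i m → ℓ ∈ blk i m →
      (a:ℤ) * n k - (b:ℤ) * n ℓ
        = (b:ℤ) * 2^(2^(2^(2^i)))
          * ((2:ℤ)^(k+r+i*m) - 2^(ℓ+i*m) + (2^r-1)*m) := by
    intro i m k ℓ hm hk hl
    rw [hn i m hm k hk, hn i m hm ℓ hl, hab]
    push_cast
    ring
  -- the summand as a function of i
  set f : ℤ → ℕ → ℕ := fun c i => ∑ m ∈ Finset.Icc 1 (Mblk g i),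
      ((blk i m ×ˢ blk i m).filter
        (fun p => p.1 + r ≠ p.2 ∧ (a : ℤ) * n p.1 - (b : ℤ) * n p.2 = c)).card with hf
  -- for i > r+3, at most one solution per block
  have hone : ∀ c : ℤ, ∀ i : ℕ, r + 3 ≤ i → f c i ≤ 1 := by
    intro c i hi
    rw [hf]
    simp only
    rw [← Finset.card_sigma]
    apply Finset.card_le_one.mpr
    rintro ⟨m, k, l⟩ hx ⟨m', k', l'⟩ hy
    simp only [Finset.mem_sigma, Finset.mem_filter, Finset.mem_product] at hx hy
    obtain ⟨hm, ⟨hk, hl⟩, hne1, heq1⟩ := hx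
    obtain ⟨hm', ⟨hk', hl'⟩, hne2, heq2⟩ := hy
    have hDeq : ((2:ℤ)^(k+r+i*m) - 2^(l+i*m) + (2^r-1)*m)
        = ((2:ℤ)^(k'+r+i*m') - 2^(l'+i*m') + (2^r-1)*m') := by
      have e1 := hexp i m k l hm hk hl
      have e2 := hexp i m' k' l' hm' hk' hl'
      rw [heq1] at e1
      rw [heq2] at e2
      have hbne : ((b:ℤ) * 2^(2^(2^(2^i)))) ≠ 0 := by positivity
      apply mul_left_cancel₀ hbne
      rw [← e1, ← e2]
    have hmIcc := Finset.mem_Icc.mp hm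
    have hmIcc' := Finset.mem_Icc.mp hm'
    obtain ⟨hk1, _⟩ := hrange i m k hm hk
    obtain ⟨hl1, _⟩ := hrange i m l hm hl
    obtain ⟨hk1', _⟩ := hrange i m' k' hm' hk'
    obtain ⟨hl1', _⟩ := hrange i m' l' hm' hl'
    obtain ⟨e1, e2, e3⟩ := stmt13.within_block r i hr hi (Mblk g i) (hMle i)
      m m' k l k' l' hmIcc.1 hmIcc.2 hmIcc'.1 hmIcc'.2 hk1 hl1 hk1' hl1' hne1 hDeq
    subst e1; subst e2; subst e3
    rfl
  -- for i > r+3 with a solution, extract the odd decomposition of c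
  have hsol : ∀ c : ℤ, ∀ i : ℕ, r + 3 ≤ i → f c i ≠ 0 →
      ∃ s O, s + 1 ≤ 3^(i+1) ∧ ¬ (2:ℤ) ∣ O ∧
        c = (b:ℤ) * 2^(2^(2^(2^i)) + s) * O := by
    intro c i hi hne
    rw [hf] at hne
    simp only at hne
    obtain ⟨m, hm, hcne⟩ := Finset.exists_ne_zero_of_sum_ne_zero hne
    obtain ⟨⟨k, l⟩, hp⟩ := Finset.card_ne_zero.mp hcne
    simp only [Finset.mem_filter, Finset.mem_product] at hp
    obtain ⟨⟨hk, hl⟩, hne1, heq1⟩ := hp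
    have hmIcc := Finset.mem_Icc.mp hm
    obtain ⟨hk1, _⟩ := hrange i m k hm hk
    obtain ⟨hl1, _⟩ := hrange i m l hm hl
    have hm2 : m ≤ 2^(3^(i+1)-1) := le_trans hmIcc.2 (hMle i)
    obtain ⟨s, O, hs, hO, hDec⟩ := stmt13.odd_decomp r i m k l hr (by omega)
      hmIcc.1 hm2 hk1 hl1
    refine ⟨s, O, hs, hO, ?_⟩
    have e1 := hexp i m k l hm hk hl
    rw [heq1] at e1
    rw [e1, hDec, pow_add]
    ring
  -- cross-block uniqueness
  have huni : ∀ c : ℤ, ∀ i j : ℕ, r + 3 ≤ i → r + 3 ≤ j →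
      f c i ≠ 0 → f c j ≠ 0 → i = j := by
    intro c i j hi hj hfi hfj
    rcases lt_trichotomy i j with hij | hij | hij
    · exfalso
      obtain ⟨s, O, hs, hO, hc1⟩ := hsol c i hi hfi
      obtain ⟨s', O', _, _, hc2⟩ := hsol c j hj hfj
      have hL2 := stmt13.L2 i (by omega)
      have hL3 := stmt13.L3 (show i + 1 ≤ j by omega)
      have hlt : 2^(2^(2^i)) + s < 2^(2^(2^j)) + s' := by omega
      exact stmt13.cross_block hb hO hlt (hc1.symm.trans hc2)
    · exact hij
    · exfalso
      obtain ⟨s, O, hs, hO, hc1⟩ := hsol c j hj hfj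
      obtain ⟨s', O', _, _, hc2⟩ := hsol c i hi hfi
      have hL2 := stmt13.L2 j (by omega)
      have hL3 := stmt13.L3 (show j + 1 ≤ i by omega)
      have hlt : 2^(2^(2^j)) + s < 2^(2^(2^i)) + s' := by omega
      exact stmt13.cross_block hb hO hlt (hc1.symm.trans hc2)
  -- the constant
  refine ⟨(∑ i ∈ Finset.Icc 1 (r+3), ∑ m ∈ Finset.Icc 1 (Mblk g i),
      (blk i m ×ˢ blk i m).card) + 1, ?_⟩
  intro c I
  rw [← Finset.sum_filter_add_sum_filter_not (Finset.Icc 1 I) (fun i => i ≤ r+3)]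
  have hpart1 : (∑ i ∈ (Finset.Icc 1 I).filter (fun i => i ≤ r+3), f c i)
      ≤ ∑ i ∈ Finset.Icc 1 (r+3), ∑ m ∈ Finset.Icc 1 (Mblk g i),
          (blk i m ×ˢ blk i m).card := by
    calc (∑ i ∈ (Finset.Icc 1 I).filter (fun i => i ≤ r+3), f c i)
        ≤ ∑ i ∈ Finset.Icc 1 (r+3), f c i := by
          apply Finset.sum_le_sum_of_subset
          intro x hx
          simp only [Finset.mem_filter, Finset.mem_Icc] at hx ⊢
          omega
    _ ≤ ∑ i ∈ Finset.Icc 1 (r+3), ∑ m ∈ Finset.Icc 1 (Mblk g i),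
          (blk i m ×ˢ blk i m).card := by
          apply Finset.sum_le_sum
          intro i _
          apply Finset.sum_le_sum
          intro m _
          exact Finset.card_filter_le _ _
  have hpart2 : (∑ i ∈ (Finset.Icc 1 I).filter (fun i => ¬ i ≤ r+3), f c i) ≤ 1 := by
    set s := (Finset.Icc 1 I).filter (fun i => ¬ i ≤ r+3) with hs
    have h1 : (∑ i ∈ s, f c i) = ∑ i ∈ s.filter (fun i => f c i ≠ 0), f c i :=
      (Finset.sum_filter_ne_zero s).symm
    rw [h1]
    have hcard1 : (s.filter (fun i => f c i ≠ 0)).card ≤ 1 := by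
      apply Finset.card_le_one.mpr
      intro x hx y hy
      simp only [hs, Finset.mem_filter, Finset.mem_Icc] at hx hy
      exact huni c x y (by omega) (by omega) hx.2 hy.2
    calc (∑ i ∈ s.filter (fun i => f c i ≠ 0), f c i)
        ≤ ∑ i ∈ s.filter (fun i => f c i ≠ 0), 1 := by
          apply Finset.sum_le_sum
          intro i hi
          simp only [hs, Finset.mem_filter, Finset.mem_Icc] at hi
          exact hone c i (by omega)
    _ = (s.filter (fun i => f c i ≠ 0)).card := by simp
    _ ≤ 1 := hcard1
  have := Nat.add_le_add hpart1 hpart2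
  exact this
end

section
/- Let (n_k)_{k≥1} be a lacunary sequence of positive integers with growth factor q > 1. For large N, partition {1,…,N} into consecutive alternating blocks Δ_1, Δ_1', Δ_2, Δ_2', …, Δ_n, Δ_n' with #Δ_i = (log N)^5 and #Δ_i' = 6·log_q N for each i. Then for all sufficiently large N (depending on q) and all real λ with |λ| ≤ 1/(6 log_q N): ∫₀¹ exp(λ·Σ_{i=1}^n Σ_{k ∈ Δ_i'} cos(2π n_k x)) dx ≤ exp((λ²/2)·Σ_{i=1}^n #Δ_i'). -/
open MeasureTheory Filter
open Real intervalIntegral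

set_option maxHeartbeats 1000000

lemma integral_cos_int (a : ℤ) (ha : a ≠ 0) :
    ∫ x in (0:ℝ)..1, Real.cos (2*Real.pi*a*x) = 0 := by
  have hc : (2*Real.pi*a : ℝ) ≠ 0 := by
    have := Real.pi_pos
    have : (a:ℝ) ≠ 0 := Int.cast_ne_zero.mpr ha
    positivity
  rw [show (fun x : ℝ => Real.cos (2*Real.pi*a*x)) = fun x : ℝ => Real.cos ((2*Real.pi*a)*x) from rfl]
  rw [intervalIntegral.integral_comp_mul_left Real.cos hc]
  simp only [mul_zero, mul_one, integral_cos, Real.sin_zero, sub_zero]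
  rw [show (2*Real.pi*a : ℝ) = (2*a : ℤ) * Real.pi by push_cast; ring]
  rw [Real.sin_int_mul_pi]
  simp

lemma expLe {t : ℝ} (ht : t ≤ 9/8) : Real.exp t ≤ 1 + t + t^2 := by
  rcases le_or_gt t (-1) with h | h
  · have h1 : Real.exp t < 1 := by
      calc Real.exp t < Real.exp 0 := Real.exp_lt_exp.mpr (by linarith)
        _ = 1 := Real.exp_zero
    nlinarith
  rcases le_or_gt t 1 with h2 | h2
  · have hb := Real.exp_bound (x := t) (by rw [abs_le]; constructor <;> linarith) (n := 2) (by norm_num)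
    have : |t|^2 = t^2 := sq_abs t
    simp only [Finset.sum_range_succ, Finset.sum_range_zero] at hb
    norm_num at hb
    have := (abs_sub_le_iff.1 hb).1
    nlinarith
  · set s := t - 1 with hs
    have hs0 : 0 ≤ s := by simp [hs]; linarith
    have hs1 : s ≤ 1/8 := by simp [hs]; linarith
    have h1 : Real.exp s ≤ 1 + s + s^2 := by
      have hb := Real.exp_bound (x := s) (by rw [abs_le]; constructor <;> linarith) (n := 2) (by norm_num)
      have : |s|^2 = s^2 := sq_abs s
      simp only [Finset.sum_range_succ, Finset.sum_range_zero] at hb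
      norm_num at hb
      have := (abs_sub_le_iff.1 hb).1
      nlinarith
    have he : Real.exp 1 < 2.7182818286 := Real.exp_one_lt_d9
    have he0 : (0:ℝ) < Real.exp 1 := Real.exp_pos 1
    have : Real.exp t = Real.exp 1 * Real.exp s := by
      rw [← Real.exp_add, hs]; ring_nf
    rw [this]
    have : Real.exp 1 * Real.exp s ≤ Real.exp 1 * (1 + s + s^2) := by
      apply mul_le_mul_of_nonneg_left h1 (le_of_lt he0)
    calc Real.exp 1 * Real.exp s ≤ Real.exp 1 * (1 + s + s^2) := this
      _ ≤ 2.7182818286 * (1 + s + s^2) := by nlinarith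
      _ ≤ 1 + t + t^2 := by rw [show t = s + 1 by simp [hs]]; nlinarith

/-- f is continuous and orthogonal to all cosines with integer frequency of magnitude > B. -/
def Orth (B : ℝ) (f : ℝ → ℝ) : Prop :=
  Continuous f ∧ ∀ a : ℤ, B < |(a:ℝ)| →
    (∫ x in (0:ℝ)..1, f x * Real.cos (2*Real.pi*a*x)) = 0

lemma Orth.mono {B B' : ℝ} {f : ℝ → ℝ} (h : Orth B f) (hBB : B ≤ B') : Orth B' f :=
  ⟨h.1, fun a ha => h.2 a (lt_of_le_of_lt hBB ha)⟩

lemma orth_const (B : ℝ) (hB : 0 ≤ B) (c : ℝ) : Orth B (fun _ => c) := by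
  refine ⟨continuous_const, fun a ha => ?_⟩
  have ha0 : a ≠ 0 := by
    intro h; rw [h] at ha; simp at ha; linarith
  rw [intervalIntegral.integral_const_mul, integral_cos_int a ha0, mul_zero]

lemma Orth.const_mul {B : ℝ} {f : ℝ → ℝ} (h : Orth B f) (c : ℝ) :
    Orth B (fun x => c * f x) := by
  refine ⟨continuous_const.mul h.1, fun a ha => ?_⟩
  have h0 := h.2 a ha
  have : (∫ x in (0:ℝ)..1, c * f x * Real.cos (2*Real.pi*a*x))
      = c * ∫ x in (0:ℝ)..1, f x * Real.cos (2*Real.pi*a*x) := by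
    rw [← intervalIntegral.integral_const_mul]
    congr 1; funext x; ring
  rw [this, h0, mul_zero]

lemma Orth.add {B : ℝ} {f g : ℝ → ℝ} (hf : Orth B f) (hg : Orth B g) :
    Orth B (fun x => f x + g x) := by
  refine ⟨hf.1.add hg.1, fun a ha => ?_⟩
  have key : ∀ x, (f x + g x) * Real.cos (2*Real.pi*a*x)
      = f x * Real.cos (2*Real.pi*a*x) + g x * Real.cos (2*Real.pi*a*x) := fun x => by ring
  simp only [key]
  rw [intervalIntegral.integral_add
      ((show Continuous (fun x => f x * Real.cos (2*Real.pi*a*x)) from hf.1.mul (by continuity)).intervalIntegrable 0 1)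
      ((show Continuous (fun x => g x * Real.cos (2*Real.pi*a*x)) from hg.1.mul (by continuity)).intervalIntegrable 0 1),
    hf.2 a ha, hg.2 a ha, add_zero]

lemma Orth.sum {B : ℝ} {ι : Type*} (s : Finset ι) (f : ι → ℝ → ℝ)
    (h : ∀ i ∈ s, Orth B (f i)) (hB : 0 ≤ B) :
    Orth B (fun x => ∑ i ∈ s, f i x) := by
  classical
  induction s using Finset.induction_on with
  | empty => simpa using orth_const B hB 0
  | @insert j s' hx ih =>
    simp only [Finset.sum_insert hx]
    exact (h j (Finset.mem_insert_self j s')).add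
      (ih (fun i hi => h i (Finset.mem_insert_of_mem hi)))

lemma Orth.mul_cos {B C : ℝ} {f : ℝ → ℝ} (h : Orth B f) (b : ℤ)
    (hb : |(b:ℝ)| ≤ C) : Orth (B + C) (fun x => f x * Real.cos (2*Real.pi*b*x)) := by
  refine ⟨h.1.mul (by continuity), fun a ha => ?_⟩
  have hid : ∀ x, (f x * Real.cos (2*Real.pi*b*x)) * Real.cos (2*Real.pi*a*x)
      = (1/2) * (f x * Real.cos (2*Real.pi*(a+b)*x)) + (1/2) * (f x * Real.cos (2*Real.pi*(a-b)*x)) := by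
    intro x
    have e1 : (2*Real.pi*((a:ℝ)+(b:ℝ))*x) = (2*Real.pi*a*x) + (2*Real.pi*b*x) := by ring
    have e2 : (2*Real.pi*((a:ℝ)-(b:ℝ))*x) = (2*Real.pi*a*x) - (2*Real.pi*b*x) := by ring
    push_cast
    rw [e1, e2, Real.cos_add, Real.cos_sub]
    ring
  have hid' : (fun x => (f x * Real.cos (2*Real.pi*b*x)) * Real.cos (2*Real.pi*a*x))
      = fun x => (1/2) * (f x * Real.cos (2*Real.pi*((a+b:ℤ):ℝ)*x)) + (1/2) * (f x * Real.cos (2*Real.pi*((a-b:ℤ):ℝ)*x)) := by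
    funext x; push_cast; exact hid x
  rw [hid']
  have hint : ∀ c : ℤ, IntervalIntegrable (fun x => (1/2:ℝ) * (f x * Real.cos (2*Real.pi*c*x)))
      volume 0 1 := fun c => (continuous_const.mul (h.1.mul (by continuity))).intervalIntegrable 0 1
  rw [intervalIntegral.integral_add (hint (a+b)) (hint (a-b))]
  have hfa : B < |((a+b : ℤ):ℝ)| := by
    push_cast
    have : |(a:ℝ)| - |(b:ℝ)| ≤ |(a:ℝ)+(b:ℝ)| := by
      have := abs_sub_abs_le_abs_sub (a:ℝ) (-(b:ℝ))
      simp only [abs_neg, sub_neg_eq_add] at this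
      linarith
    linarith
  have hfs : B < |((a-b : ℤ):ℝ)| := by
    push_cast
    have := abs_sub_abs_le_abs_sub (a:ℝ) (b:ℝ)
    linarith
  rw [intervalIntegral.integral_const_mul, intervalIntegral.integral_const_mul]
  have h1 := h.2 (a+b) hfa
  have h2 := h.2 (a-b) hfs
  push_cast at h1 h2 ⊢
  rw [h1, h2]; ring

noncomputable def blkT (n : ℕ → ℕ) (s : Finset ℕ) (x : ℝ) : ℝ :=
  ∑ k ∈ s, Real.cos (2*Real.pi*(n k : ℝ)*x)

noncomputable def gfun (lam : ℝ) (n : ℕ → ℕ) (s : Finset ℕ) (x : ℝ) : ℝ :=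
  1 + lam * blkT n s x + (lam * blkT n s x)^2

lemma cont_cosfreq (a : ℝ) : Continuous (fun x : ℝ => Real.cos (2*Real.pi*a*x)) := by
  continuity

lemma cont_blkT (n : ℕ → ℕ) (s : Finset ℕ) : Continuous (blkT n s) := by
  unfold blkT
  exact continuous_finset_sum s (fun k _ => cont_cosfreq (n k))

lemma cont_gfun (lam : ℝ) (n : ℕ → ℕ) (s : Finset ℕ) : Continuous (gfun lam n s) := by
  unfold gfun
  have := cont_blkT n s
  fun_prop

lemma exp_le_gfun {lam : ℝ} {n : ℕ → ℕ} {s : Finset ℕ} (h : |lam| * s.card ≤ 9/8) (x : ℝ) :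
    Real.exp (lam * blkT n s x) ≤ gfun lam n s x := by
  have hb : |blkT n s x| ≤ s.card := by
    unfold blkT
    calc |∑ k ∈ s, Real.cos (2*Real.pi*(n k : ℝ)*x)|
        ≤ ∑ k ∈ s, |Real.cos (2*Real.pi*(n k : ℝ)*x)| := Finset.abs_sum_le_sum_abs _ _
      _ ≤ ∑ k ∈ s, 1 := Finset.sum_le_sum (fun k _ => Real.abs_cos_le_one _)
      _ = s.card := by simp
  have ht : lam * blkT n s x ≤ 9/8 := by
    calc lam * blkT n s x ≤ |lam * blkT n s x| := le_abs_self _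
      _ = |lam| * |blkT n s x| := abs_mul _ _
      _ ≤ |lam| * s.card := by
          apply mul_le_mul_of_nonneg_left hb (abs_nonneg lam)
      _ ≤ 9/8 := h
  exact expLe ht

/-- expansion of gfun into constant + cosines with integer frequencies -/
lemma gfun_expand (lam : ℝ) (n : ℕ → ℕ) (s : Finset ℕ) (x : ℝ) :
    gfun lam n s x = (1 + lam^2 * s.card / 2)
      + lam * blkT n s x
      + (lam^2/2) * (∑ j ∈ s, ∑ k ∈ s, Real.cos (2*Real.pi*(((n j + n k : ℤ)):ℝ)*x))
      + (lam^2/2) * (∑ j ∈ s, ∑ k ∈ s,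
          if j = k then 0 else Real.cos (2*Real.pi*(((n j : ℤ) - (n k : ℤ)):ℝ)*x)) := by
  have hterm : ∀ j ∈ s, ∀ k ∈ s,
      Real.cos (2*Real.pi*(n j : ℝ)*x) * Real.cos (2*Real.pi*(n k : ℝ)*x)
      = (1/2) * Real.cos (2*Real.pi*(((n j + n k : ℤ)):ℝ)*x)
        + (1/2) * ((if j = k then (1:ℝ) else 0)
            + (if j = k then 0 else Real.cos (2*Real.pi*(((n j : ℤ) - (n k : ℤ)):ℝ)*x))) := by
    intro j _ k _
    by_cases h : j = k
    · subst h
      simp only [if_pos rfl, add_zero]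
      have := Real.cos_sq (2*Real.pi*(n j : ℝ)*x)
      have h2 : (2*Real.pi*(((n j + n j : ℤ)):ℝ)*x) = 2*(2*Real.pi*(n j : ℝ)*x) := by
        push_cast; ring
      rw [h2]
      norm_num
      nlinarith [this]
    · simp only [if_neg h]
      have hA : (2*Real.pi*(((n j + n k : ℤ)):ℝ)*x)
          = (2*Real.pi*(n j : ℝ)*x) + (2*Real.pi*(n k : ℝ)*x) := by push_cast; ring
      have hB : (2*Real.pi*(((n j : ℤ) - (n k : ℤ)):ℝ)*x)
          = (2*Real.pi*(n j : ℝ)*x) - (2*Real.pi*(n k : ℝ)*x) := by push_cast; ring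
      rw [hA, hB, Real.cos_add, Real.cos_sub]
      ring
  have hsq : blkT n s x * blkT n s x
      = ∑ j ∈ s, ∑ k ∈ s,
          Real.cos (2*Real.pi*(n j : ℝ)*x) * Real.cos (2*Real.pi*(n k : ℝ)*x) := by
    unfold blkT
    rw [Finset.sum_mul_sum]
  have hdiag : ∑ j ∈ s, ∑ k ∈ s, (if j = k then (1:ℝ) else 0) = s.card := by
    have : ∀ j ∈ s, ∑ k ∈ s, (if j = k then (1:ℝ) else 0) = 1 := by
      intro j hj
      rw [Finset.sum_ite_eq]
      simp [hj]
    rw [Finset.sum_congr rfl this]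
    simp
  have hsq2 : blkT n s x * blkT n s x
      = (1/2) * (∑ j ∈ s, ∑ k ∈ s, Real.cos (2*Real.pi*(((n j + n k : ℤ)):ℝ)*x))
        + (1/2) * (s.card : ℝ)
        + (1/2) * (∑ j ∈ s, ∑ k ∈ s,
            if j = k then 0 else Real.cos (2*Real.pi*(((n j : ℤ) - (n k : ℤ)):ℝ)*x)) := by
    rw [hsq, Finset.sum_congr rfl (fun j hj => Finset.sum_congr rfl (fun k hk => hterm j hj k hk))]
    simp only [Finset.sum_add_distrib, ← Finset.mul_sum, hdiag]
    ring
  unfold gfun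
  nlinarith [hsq2]

lemma mul_gfun_expand (lam : ℝ) (n : ℕ → ℕ) (s : Finset ℕ) (P : ℝ → ℝ) :
    (fun x => P x * gfun lam n s x) = fun x =>
      ((1 + lam^2 * s.card / 2) * P x)
      + (lam * ∑ k ∈ s, P x * Real.cos (2*Real.pi*(((n k : ℤ)):ℝ)*x))
      + ((lam^2/2) * ∑ j ∈ s, ∑ k ∈ s, P x * Real.cos (2*Real.pi*(((n j + n k : ℤ)):ℝ)*x))
      + ((lam^2/2) * ∑ j ∈ s, ∑ k ∈ s,
          if j = k then 0 else P x * Real.cos (2*Real.pi*(((n j : ℤ) - (n k : ℤ)):ℝ)*x)) := by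
  funext x
  rw [gfun_expand lam n s x]
  have e1 : ∑ k ∈ s, P x * Real.cos (2*Real.pi*(((n k : ℤ)):ℝ)*x)
      = P x * blkT n s x := by
    unfold blkT
    rw [Finset.mul_sum]
    apply Finset.sum_congr rfl
    intro k _
    push_cast
    ring
  have e2 : ∑ j ∈ s, ∑ k ∈ s, P x * Real.cos (2*Real.pi*(((n j + n k : ℤ)):ℝ)*x)
      = P x * ∑ j ∈ s, ∑ k ∈ s, Real.cos (2*Real.pi*(((n j + n k : ℤ)):ℝ)*x) := by
    rw [Finset.mul_sum]
    apply Finset.sum_congr rfl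
    intro j _
    rw [Finset.mul_sum]
  have e3 : ∑ j ∈ s, ∑ k ∈ s,
        (if j = k then 0 else P x * Real.cos (2*Real.pi*(((n j : ℤ) - (n k : ℤ)):ℝ)*x))
      = P x * ∑ j ∈ s, ∑ k ∈ s,
        (if j = k then 0 else Real.cos (2*Real.pi*(((n j : ℤ) - (n k : ℤ)):ℝ)*x)) := by
    rw [Finset.mul_sum]
    apply Finset.sum_congr rfl
    intro j _
    rw [Finset.mul_sum]
    apply Finset.sum_congr rfl
    intro k _
    by_cases h : j = k <;> simp [h]
  rw [e1, e2, e3]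
  ring

lemma orth_mul_gfun {B Cb lam : ℝ} {n : ℕ → ℕ} {s : Finset ℕ} {P : ℝ → ℝ}
    (hP : Orth B P) (hB : 0 ≤ B) (hCb : 0 ≤ Cb) (hfc : ∀ k ∈ s, (n k : ℝ) ≤ Cb) :
    Orth (B + 2*Cb) (fun x => P x * gfun lam n s x) := by
  have hB' : (0:ℝ) ≤ B + 2*Cb := by linarith
  have hBle : B ≤ B + 2*Cb := by linarith
  rw [mul_gfun_expand]
  apply Orth.add
  apply Orth.add
  apply Orth.add
  · exact (hP.const_mul _).mono hBle
  · apply Orth.const_mul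
    apply Orth.sum _ _ _ hB'
    intro k hk
    have := hP.mul_cos (n k : ℤ) (C := 2*Cb) (by
      rw [abs_of_nonneg (by positivity)]
      push_cast
      have := hfc k hk
      linarith)
    exact this
  · apply Orth.const_mul
    apply Orth.sum _ _ _ hB'
    intro j hj
    apply Orth.sum _ _ _ hB'
    intro k hk
    exact hP.mul_cos ((n j + n k : ℤ)) (C := 2*Cb) (by
      rw [abs_of_nonneg (by positivity)]
      push_cast
      have := hfc j hj
      have := hfc k hk
      linarith)
  · apply Orth.const_mul
    apply Orth.sum _ _ _ hB'
    intro j hj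
    apply Orth.sum _ _ _ hB'
    intro k hk
    by_cases h : j = k
    · have : (fun x => if j = k then (0:ℝ)
          else P x * Real.cos (2*Real.pi*(((n j : ℤ) - (n k : ℤ)):ℝ)*x)) = fun _ => (0:ℝ) := by
        simp [h]
      rw [this]
      exact orth_const _ hB' 0
    · have heq : (fun x => if j = k then (0:ℝ)
          else P x * Real.cos (2*Real.pi*(((n j : ℤ) - (n k : ℤ)):ℝ)*x))
          = fun x => P x * Real.cos (2*Real.pi*(((n j : ℤ) - (n k : ℤ)):ℝ)*x) := by
        simp [h]
      rw [heq]
      have horth := hP.mul_cos ((n j : ℤ) - (n k : ℤ)) (C := 2*Cb) (by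
        have h1 := hfc j hj
        have h2 := hfc k hk
        have h3 : (0:ℝ) ≤ (n j : ℝ) := Nat.cast_nonneg _
        have h4 : (0:ℝ) ≤ (n k : ℝ) := Nat.cast_nonneg _
        push_cast
        rw [abs_le]
        constructor <;> linarith)
      have hcast : (fun x => P x * Real.cos (2*Real.pi*(((((n j : ℤ) - (n k : ℤ)) : ℤ)):ℝ)*x))
          = fun x => P x * Real.cos (2*Real.pi*(((n j : ℤ) - (n k : ℤ)):ℝ)*x) := by
        push_cast
        rfl
      rwa [hcast] at horth

lemma integral_double_sum_zero {s : Finset ℕ} (F : ℕ → ℕ → ℝ → ℝ)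
    (hi : ∀ j k, IntervalIntegrable (F j k) MeasureTheory.volume 0 1)
    (hz : ∀ j ∈ s, ∀ k ∈ s, ∫ x in (0:ℝ)..1, F j k x = 0) :
    ∫ x in (0:ℝ)..1, (∑ j ∈ s, ∑ k ∈ s, F j k x) = 0 := by
  have hswap : ∀ x : ℝ, (∑ j ∈ s, ∑ k ∈ s, F j k x) = ∑ p ∈ s ×ˢ s, F p.1 p.2 x := by
    intro x
    rw [Finset.sum_product]
  simp only [hswap]
  have h : ∫ x in (0:ℝ)..1, ∑ p ∈ s ×ˢ s, F p.1 p.2 x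
      = ∑ p ∈ s ×ˢ s, ∫ x in (0:ℝ)..1, F p.1 p.2 x :=
    intervalIntegral.integral_finset_sum (fun p _ => hi p.1 p.2)
  rw [h]
  apply Finset.sum_eq_zero
  intro p hp
  have := Finset.mem_product.mp hp
  exact hz p.1 this.1 p.2 this.2

lemma integral_mul_gfun {B lam : ℝ} {n : ℕ → ℕ} {s : Finset ℕ} {P : ℝ → ℝ}
    (hP : Orth B P) (hB : 0 ≤ B)
    (hf1 : ∀ k ∈ s, B < (n k : ℝ))
    (hf2 : ∀ j ∈ s, ∀ k ∈ s, j ≠ k → B < |(n j : ℝ) - (n k : ℝ)|) :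
    ∫ x in (0:ℝ)..1, P x * gfun lam n s x
      = (1 + lam^2 * s.card / 2) * ∫ x in (0:ℝ)..1, P x := by
  have hPc := hP.1
  have hic : ∀ (a : ℝ), IntervalIntegrable (fun x => P x * Real.cos (2*Real.pi*a*x)) volume 0 1 :=
    fun a => (hPc.mul (cont_cosfreq a)).intervalIntegrable 0 1
  have hii1 : IntervalIntegrable (fun x => (1 + lam^2 * s.card / 2) * P x) volume 0 1 :=
    (continuous_const.mul hPc).intervalIntegrable 0 1
  have hii2 : IntervalIntegrable (fun x =>
      lam * ∑ k ∈ s, P x * Real.cos (2*Real.pi*(((n k : ℤ)):ℝ)*x)) volume 0 1 :=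
    ((continuous_const.mul (continuous_finset_sum s
      (fun k _ => hPc.mul (cont_cosfreq _))))).intervalIntegrable 0 1
  have hii3 : IntervalIntegrable (fun x =>
      (lam^2/2) * ∑ j ∈ s, ∑ k ∈ s, P x * Real.cos (2*Real.pi*(((n j + n k : ℤ)):ℝ)*x)) volume 0 1 :=
    ((continuous_const.mul (continuous_finset_sum s
      (fun j _ => continuous_finset_sum s (fun k _ => hPc.mul (cont_cosfreq _)))))).intervalIntegrable 0 1
  have hii4 : IntervalIntegrable (fun x =>
      (lam^2/2) * ∑ j ∈ s, ∑ k ∈ s,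
        (if j = k then 0 else P x * Real.cos (2*Real.pi*(((n j : ℤ) - (n k : ℤ)):ℝ)*x))) volume 0 1 := by
    apply Continuous.intervalIntegrable
    apply continuous_const.mul
    apply continuous_finset_sum
    intro j _
    apply continuous_finset_sum
    intro k _
    by_cases h : j = k
    · simp only [if_pos h]; exact continuous_const
    · simp only [if_neg h]; exact hPc.mul (cont_cosfreq _)
  rw [show (fun x => P x * gfun lam n s x) = _ from mul_gfun_expand lam n s P]
  rw [intervalIntegral.integral_add ((hii1.add hii2).add hii3) hii4,
      intervalIntegral.integral_add (hii1.add hii2) hii3,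
      intervalIntegral.integral_add hii1 hii2]
  have hz2 : (∫ x in (0:ℝ)..1,
      lam * ∑ k ∈ s, P x * Real.cos (2*Real.pi*(((n k : ℤ)):ℝ)*x)) = 0 := by
    rw [intervalIntegral.integral_const_mul]
    rw [intervalIntegral.integral_finset_sum (fun k _ => hic _)]
    rw [Finset.sum_eq_zero, mul_zero]
    intro k hk
    apply hP.2 (n k : ℤ)
    rw [abs_of_nonneg (by positivity)]
    push_cast
    exact hf1 k hk
  have hz3 : (∫ x in (0:ℝ)..1,
      (lam^2/2) * ∑ j ∈ s, ∑ k ∈ s, P x * Real.cos (2*Real.pi*(((n j + n k : ℤ)):ℝ)*x)) = 0 := by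
    rw [intervalIntegral.integral_const_mul]
    have h0 : (∫ x in (0:ℝ)..1,
        ∑ j ∈ s, ∑ k ∈ s, P x * Real.cos (2*Real.pi*(((n j + n k : ℤ)):ℝ)*x)) = 0 := by
      apply integral_double_sum_zero
        (fun j k x => P x * Real.cos (2*Real.pi*(((n j + n k : ℤ)):ℝ)*x))
        (fun j k => hic _)
      intro j hj k hk
      apply hP.2 ((n j + n k : ℤ))
      rw [abs_of_nonneg (by positivity)]
      push_cast
      have h1 := hf1 k hk
      have h2 : (0:ℝ) ≤ (n j : ℝ) := Nat.cast_nonneg _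
      linarith
    rw [h0, mul_zero]
  have hz4 : (∫ x in (0:ℝ)..1,
      (lam^2/2) * ∑ j ∈ s, ∑ k ∈ s,
        (if j = k then 0 else P x * Real.cos (2*Real.pi*(((n j : ℤ) - (n k : ℤ)):ℝ)*x))) = 0 := by
    have hicc : ∀ j k : ℕ, IntervalIntegrable (fun x =>
        (if j = k then (0:ℝ) else P x * Real.cos (2*Real.pi*(((n j : ℤ) - (n k : ℤ)):ℝ)*x))) MeasureTheory.volume 0 1 := by
      intro j k
      by_cases h : j = k
      · simp only [if_pos h]; exact intervalIntegrable_const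
      · simp only [if_neg h]; exact hic _
    rw [intervalIntegral.integral_const_mul]
    have h0 : (∫ x in (0:ℝ)..1, ∑ j ∈ s, ∑ k ∈ s,
        (if j = k then (0:ℝ) else P x * Real.cos (2*Real.pi*(((n j : ℤ) - (n k : ℤ)):ℝ)*x))) = 0 := by
      apply integral_double_sum_zero
        (fun j k x => if j = k then (0:ℝ) else P x * Real.cos (2*Real.pi*(((n j : ℤ) - (n k : ℤ)):ℝ)*x))
        hicc
      intro j hj k hk
      by_cases h : j = k
      · simp [h]
      · simp only [if_neg h]
        have h0 := hP.2 ((n j : ℤ) - (n k : ℤ)) (by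
          push_cast
          exact hf2 j hj k hk h)
        have hcast : ∀ x:ℝ, Real.cos (2*Real.pi*(((((n j : ℤ) - (n k : ℤ)) : ℤ)):ℝ)*x)
            = Real.cos (2*Real.pi*(((n j : ℤ) - (n k : ℤ)):ℝ)*x) := by
          intro x; push_cast; rfl
        simp only [hcast] at h0
        exact h0
    rw [h0, mul_zero]
  rw [hz2, hz3, hz4, intervalIntegral.integral_const_mul]
  ring

lemma blkT_apply (n : ℕ → ℕ) (s : Finset ℕ) (x : ℝ) :
    blkT n s x = ∑ k ∈ s, Real.cos (2*Real.pi*(n k : ℝ)*x) := rfl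

theorem statement15 (q : ℝ) (hq : 1 < q) :
    ∃ N₀ : ℕ, ∀ N : ℕ, N₀ ≤ N →
      ∀ n : ℕ → ℕ, (∀ k, 1 ≤ n k) →
        (∀ k, 1 ≤ k → q * (n k : ℝ) ≤ (n (k+1) : ℝ)) →
      -- D = #Δ_i = (log N)^5 and D' = #Δ_i' = 6·log_q N (as integers),
      -- nb = number of blocks, with {1,…,N} partitioned into alternating
      -- consecutive blocks Δ_1, Δ_1', …, Δ_nb, Δ_nb' of lengths D and D';
      -- the i-th dashed block Δ_i' is {(i−1)(D+D') + D + 1, …, i(D+D')}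
      ∀ D D' nb : ℕ,
        D = ⌈(Real.log N) ^ 5⌉₊ →
        D' = ⌈6 * Real.log N / Real.log q⌉₊ →
        N = nb * (D + D') →
      ∀ lam : ℝ, |lam| ≤ Real.log q / (6 * Real.log N) →
        (∫ x in (0:ℝ)..1, Real.exp (lam *
          ∑ i ∈ Finset.Icc 1 nb,
            ∑ k ∈ Finset.Icc ((i-1)*(D+D') + D + 1) (i*(D+D')),
              Real.cos (2 * Real.pi * (n k : ℝ) * x)))
          ≤ Real.exp (lam ^ 2 / 2 * (nb * D' : ℕ)) := by
  have hq0 : (0:ℝ) < q := lt_trans one_pos hq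
  have hlq : 0 < Real.log q := Real.log_pos hq
  set c : ℝ := min 1 (q-1) with hc
  have hc0 : 0 < c := lt_min one_pos (by linarith)
  have hc1 : c ≤ 1 := min_le_left _ _
  have hcq : c ≤ q - 1 := min_le_right _ _
  set L : ℝ := Real.log (1/c) with hLdef
  have hL0 : 0 ≤ L := Real.log_nonneg ((le_div_iff₀ hc0).mpr (by linarith))
  set Mq : ℝ := max (max 2 ((4/3)*Real.log q)) ((2+L)/Real.log q) with hMq
  refine ⟨⌈Real.exp Mq⌉₊ + 1, ?_⟩
  intro N hN n hn1 hlac D D' nb hD hD' hpart lam hlam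
  -- basic size facts
  have hN1 : 1 ≤ N := le_trans (by omega) hN
  have hN0R : (0:ℝ) < N := by exact_mod_cast hN1
  have hNR : Real.exp Mq ≤ (N:ℝ) := by
    have h1 : Real.exp Mq ≤ (⌈Real.exp Mq⌉₊ : ℝ) := Nat.le_ceil _
    have h2 : ((⌈Real.exp Mq⌉₊ : ℕ):ℝ) ≤ (N:ℝ) := by exact_mod_cast le_trans (by omega) hN
    linarith
  set t : ℝ := Real.log N with htdef
  have ht : Mq ≤ t := by
    rw [htdef, ← Real.log_exp Mq]
    exact Real.log_le_log (Real.exp_pos _) hNR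
  have ht2 : 2 ≤ t := le_trans (le_trans (le_max_left _ _) (le_max_left _ _)) ht
  have ht0 : 0 < t := by linarith
  have ht43 : (4/3)*Real.log q ≤ t := le_trans (le_trans (le_max_right _ _) (le_max_left _ _)) ht
  have htL : (2+L)/Real.log q ≤ t := le_trans (le_max_right _ _) ht
  have htlq : 2 + L ≤ t * Real.log q := (div_le_iff₀ hlq).mp htL
  -- D, D' facts
  have hD1 : 1 ≤ D := by rw [hD]; exact Nat.one_le_ceil_iff.mpr (by positivity)
  have hD'1 : 1 ≤ D' := by
    rw [hD']; exact Nat.one_le_ceil_iff.mpr (by positivity)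
  have hD'le : (D' : ℝ) ≤ 6*t/Real.log q + 1 := by
    rw [hD']
    have := Nat.ceil_lt_add_one (R := ℝ) (a := 6 * Real.log N / Real.log q) (by positivity)
    rw [← htdef] at this
    linarith [this]
  have hDge : (t^5 : ℝ) ≤ D := by rw [hD]; exact Nat.le_ceil _
  have hlam' : |lam| ≤ Real.log q/(6*t) := hlam
  have hlamD' : |lam| * (D':ℝ) ≤ 9/8 := by
    have h1 : |lam| * (D':ℝ) ≤ (Real.log q/(6*t)) * (6*t/Real.log q + 1) := by
      apply mul_le_mul hlam' hD'le (Nat.cast_nonneg _) (by positivity)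
    have h2 : (Real.log q/(6*t)) * (6*t/Real.log q + 1) = 1 + Real.log q/(6*t) := by
      field_simp
    have h3 : Real.log q/(6*t) ≤ 1/8 := by
      rw [div_le_iff₀ (by positivity)]
      linarith
    linarith
  have hNt : Real.exp t = (N:ℝ) := Real.exp_log hN0R
  have hLc : Real.exp L = 1/c := Real.exp_log (by positivity)
  clear_value t c L Mq
  clear hc hLdef hMq htdef ht hNR hN hD hD' hlam htL ht43
  -- key magnitude bound
  have hkey : 2*(N:ℝ) + 1 ≤ c * q^(D+1) := by
    have h1 : Real.exp (t + 2 + L) ≤ Real.exp (t^5 * Real.log q) := by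
      apply Real.exp_le_exp.mpr
      have h1t : (1:ℝ) ≤ t := by linarith
      have h4 : t ≤ t^4 := by
        calc t = t^1 := (pow_one t).symm
          _ ≤ t^4 := pow_le_pow_right₀ h1t (by norm_num)
      nlinarith [htlq, ht2, hL0, ht0, mul_le_mul_of_nonneg_left htlq (by positivity : (0:ℝ) ≤ t^4)]
    have h2 : Real.exp (t^5 * Real.log q) ≤ q^(D+1) := by
      calc Real.exp (t^5 * Real.log q) = q ^ (t^5 : ℝ) := by
            rw [Real.rpow_def_of_pos hq0, mul_comm]
        _ ≤ q ^ (((D+1 : ℕ)) : ℝ) := by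
            apply Real.rpow_le_rpow_of_exponent_le (le_of_lt hq)
            push_cast
            linarith
        _ = q ^ (D+1) := Real.rpow_natCast q (D+1)
    have he2 : (7:ℝ) ≤ Real.exp 2 := by
      have h := Real.exp_one_gt_d9
      have : Real.exp 2 = Real.exp 1 * Real.exp 1 := by
        rw [← Real.exp_add]; norm_num
      nlinarith
    have hsplit : Real.exp (t+2+L) = (N:ℝ) * Real.exp 2 * (1/c) := by
      rw [Real.exp_add, Real.exp_add, hNt, hLc]
    have hchain : (2*(N:ℝ)+1) * (1:ℝ) ≤ Real.exp (t+2+L) * c := by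
      rw [hsplit]
      have : (N:ℝ) * Real.exp 2 * (1/c) * c = (N:ℝ) * Real.exp 2 := by
        field_simp
      rw [this, mul_one]
      have hN1R : (1:ℝ) ≤ (N:ℝ) := by exact_mod_cast hN1
      nlinarith [mul_le_mul_of_nonneg_left he2 (Nat.cast_nonneg N)]
    have := le_trans h1 h2
    nlinarith [mul_le_mul_of_nonneg_right this (le_of_lt hc0)]
  -- monotonicity & growth of n
  have hmono : ∀ j k : ℕ, 1 ≤ j → j ≤ k → (n j : ℝ) ≤ n k := by
    intro j k hj
    induction k with
    | zero => intro hjk; exact absurd (hj.trans hjk) (by omega)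
    | succ k ih =>
      intro hjk
      rcases Nat.lt_or_ge j (k+1) with h | h
      · have hjk' : j ≤ k := by omega
        have hk1 : 1 ≤ k := by omega
        have h1 := ih hjk'
        have h2 := hlac k hk1
        have h3 : (n k : ℝ) ≤ q * n k := by
          nlinarith [Nat.cast_nonneg (α := ℝ) (n k), hn1 k,
            (by exact_mod_cast hn1 k : (1:ℝ) ≤ (n k:ℝ))]
        linarith
      · have : j = k+1 := by omega
        rw [this]
  have hgrow : ∀ j d : ℕ, 1 ≤ j → q^d * (n j:ℝ) ≤ n (j+d) := by
    intro j d hj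
    induction d with
    | zero => simp
    | succ d ih =>
      have h1 : 1 ≤ j + d := by omega
      have h2 := hlac (j+d) h1
      calc q^(d+1) * (n j:ℝ) = q * (q^d * n j) := by ring
        _ ≤ q * n (j+d) := by
            apply mul_le_mul_of_nonneg_left ih (le_of_lt hq0)
        _ ≤ n (j+d+1) := h2
  have hstrict : ∀ j k : ℕ, 1 ≤ j → j < k → (n j : ℝ) < n k := by
    intro j k hj hjk
    have h1 : (n j:ℝ) < q * n j := by
      nlinarith [(by exact_mod_cast hn1 j : (1:ℝ) ≤ (n j:ℝ))]
    have h2 := hlac j hj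
    have h3 := hmono (j+1) k (by omega) (by omega)
    linarith
  have hDd1 : 1 ≤ D + D' := by omega
  have hcard : ∀ i, 1 ≤ i →
      (Finset.Icc ((i-1)*(D+D')+D+1) (i*(D+D'))).card = D' := by
    intro i hi
    obtain ⟨m, rfl⟩ : ∃ m, i = m + 1 := ⟨i-1, by omega⟩
    rw [Nat.card_Icc]
    have h1 : (m+1-1) = m := by omega
    rw [h1]
    have h2 : (m+1)*(D+D') = m*(D+D') + (D+D') := by ring
    omega
  have hnb1 : 1 ≤ nb := by
    rcases Nat.eq_zero_or_pos nb with h | h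
    · rw [h] at hpart; simp at hpart; omega
    · exact h
  have hnbN : nb ≤ N := by
    rw [hpart]
    calc nb = nb * 1 := (mul_one nb).symm
      _ ≤ nb * (D+D') := Nat.mul_le_mul_left nb hDd1
  -- partial frequency sums
  set Sb : ℕ → ℝ := fun m => ∑ i ∈ Finset.Icc 1 m, 2*((n (i*(D+D'))):ℝ) with hSbdef
  have hSb0 : ∀ m, 0 ≤ Sb m := by
    intro m
    apply Finset.sum_nonneg
    intro i _
    positivity
  have hSbzero : Sb 0 = 0 := by
    rw [hSbdef]
    simp
  have hSbsucc : ∀ m, Sb (m+1) = Sb m + 2*((n ((m+1)*(D+D'))):ℝ) := by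
    intro m
    rw [hSbdef]
    exact Finset.sum_Icc_succ_top (by omega) _
  have hSbval : ∀ m, Sb m = ∑ i ∈ Finset.Icc 1 m, 2*((n (i*(D+D'))):ℝ) := fun m => rfl
  clear_value Sb
  clear hSbdef
  -- frequency lower bounds for block m+1
  have hblk1 : ∀ m k, m + 1 ≤ nb → k ∈ Finset.Icc (m*(D+D')+D+1) ((m+1)*(D+D')) →
      1 ≤ k := by
    intro m k _ hk
    have := (Finset.mem_Icc.mp hk).1
    omega
  have hfreqs : ∀ m, m + 1 ≤ nb →
      (∀ k ∈ Finset.Icc (m*(D+D')+D+1) ((m+1)*(D+D')), Sb m < (n k : ℝ)) ∧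
      (∀ j ∈ Finset.Icc (m*(D+D')+D+1) ((m+1)*(D+D')),
        ∀ k ∈ Finset.Icc (m*(D+D')+D+1) ((m+1)*(D+D')), j ≠ k →
          Sb m < |(n j : ℝ) - (n k : ℝ)|) := by
    intro m hm
    rcases Nat.eq_zero_or_pos m with hm0 | hm0
    · subst hm0
      rw [hSbzero]
      constructor
      · intro k hk
        have h := hn1 k
        have h0 : 0 < n k := h
        exact_mod_cast h0
      · intro j hj k hk hjk
        rw [abs_pos, sub_ne_zero]
        have hj1 := hblk1 0 j hm hj
        have hk1 := hblk1 0 k hm hk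
        rcases lt_or_gt_of_ne hjk with h | h
        · exact ne_of_lt (hstrict j k hj1 h)
        · exact (ne_of_lt (hstrict k j hk1 h)).symm
    · -- m ≥ 1
      set P := m*(D+D') with hPdef
      have hP1 : 1 ≤ P := by
        calc 1 = 1*1 := rfl
          _ ≤ m*(D+D') := Nat.mul_le_mul hm0 hDd1
      have hnP1 : (1:ℝ) ≤ (n P : ℝ) := by exact_mod_cast hn1 P
      have hk_lb : ∀ k ∈ Finset.Icc (m*(D+D')+D+1) ((m+1)*(D+D')),
          q^(D+1) * (n P:ℝ) ≤ n k := by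
        intro k hk
        have hk1 := (Finset.mem_Icc.mp hk).1
        have hd : D+1 ≤ k - P := by omega
        have hkP : k = P + (k - P) := by omega
        have h1 := hgrow P (k-P) hP1
        rw [← hkP] at h1
        have h2 : q^(D+1) ≤ q^(k-P) := pow_le_pow_right₀ (le_of_lt hq) hd
        calc q^(D+1) * (n P:ℝ) ≤ q^(k-P) * (n P:ℝ) := by
              apply mul_le_mul_of_nonneg_right h2 (by positivity)
          _ ≤ n k := h1
      have hSm : Sb m ≤ 2*(m:ℝ)*(n P:ℝ) := by
        have h1 : Sb m ≤ ∑ _i ∈ Finset.Icc 1 m, 2*((n P):ℝ) := by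
          rw [hSbval]
          apply Finset.sum_le_sum
          intro i hi
          have him := Finset.mem_Icc.mp hi
          have h2 : i*(D+D') ≤ P := by
            rw [hPdef]; exact Nat.mul_le_mul_right _ him.2
          have h3 : 1 ≤ i*(D+D') := by
            calc 1 = 1*1 := rfl
              _ ≤ i*(D+D') := Nat.mul_le_mul him.1 hDd1
          have := hmono (i*(D+D')) P h3 h2
          linarith
        have h2 : ∑ _i ∈ Finset.Icc 1 m, 2*((n P):ℝ) = (m:ℝ) * (2*(n P:ℝ)) := by
          rw [Finset.sum_const, Nat.card_Icc]
          simp [nsmul_eq_mul]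
        rw [h2] at h1
        linarith
      have hmN : (m:ℝ) ≤ (N:ℝ) := by
        have : m ≤ N := le_trans (by omega) hnbN
        exact_mod_cast this
      have hq1pow : (0:ℝ) < q^(D+1) := by positivity
      have hbase : (2*(N:ℝ)+1) * (n P:ℝ) ≤ c * q^(D+1) * (n P:ℝ) := by
        apply mul_le_mul_of_nonneg_right hkey (by positivity)
      have hSmlt : Sb m < (2*(N:ℝ)+1) * (n P:ℝ) := by
        have hmm : 2*(m:ℝ) ≤ 2*(N:ℝ) := by linarith
        have h1 : 2*(m:ℝ)*(n P:ℝ) ≤ 2*(N:ℝ)*(n P:ℝ) :=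
          mul_le_mul_of_nonneg_right hmm (by positivity)
        nlinarith [hnP1]
      constructor
      · intro k hk
        have h1 := hk_lb k hk
        have h2 : c * q^(D+1) * (n P:ℝ) ≤ q^(D+1) * (n P:ℝ) := by
          nlinarith [mul_nonneg (by linarith : (0:ℝ) ≤ 1 - c)
            (by positivity : (0:ℝ) ≤ q^(D+1)*(n P:ℝ))]
        linarith
      · intro j hj k hk hjk
        have hj1 := hblk1 m j hm hj
        have hk1 := hblk1 m k hm hk
        -- wlog-type local claim
        have key : ∀ a b : ℕ, a ∈ Finset.Icc (m*(D+D')+D+1) ((m+1)*(D+D')) →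
            b ∈ Finset.Icc (m*(D+D')+D+1) ((m+1)*(D+D')) → b < a →
            Sb m < (n a : ℝ) - (n b : ℝ) := by
          intro a b ha hb hba
          have hb1 := hblk1 m b hm hb
          have h1 : q * (n b:ℝ) ≤ n (b+1) := hlac b hb1
          have h2 : (n (b+1):ℝ) ≤ n a := hmono (b+1) a (by omega) (by omega)
          have h3 := hk_lb b hb
          have h4 : (q-1) * (n b:ℝ) ≤ (n a:ℝ) - n b := by linarith
          have h5 : (q-1) * (q^(D+1) * (n P:ℝ)) ≤ (q-1) * (n b:ℝ) := by
            apply mul_le_mul_of_nonneg_left h3 (by linarith)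
          have h6 : c * q^(D+1) * (n P:ℝ) ≤ (q-1) * (q^(D+1) * (n P:ℝ)) := by
            have h7 : c * q^(D+1) ≤ (q-1) * q^(D+1) :=
              mul_le_mul_of_nonneg_right hcq (le_of_lt hq1pow)
            nlinarith [mul_le_mul_of_nonneg_right h7 (by positivity : (0:ℝ) ≤ (n P:ℝ))]
          linarith
        rcases lt_or_gt_of_ne hjk with h | h
        · have hlt := key k j hk hj h
          have hpos : (0:ℝ) < (n k:ℝ) - (n j:ℝ) := lt_of_le_of_lt (hSb0 m) hlt
          rw [abs_sub_comm, abs_of_pos hpos]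
          linarith
        · have hlt := key j k hj hk h
          have hpos : (0:ℝ) < (n j:ℝ) - (n k:ℝ) := lt_of_le_of_lt (hSb0 m) hlt
          rw [abs_of_pos hpos]
          linarith
  -- main induction
  have hOmain : ∀ m, m ≤ nb →
      (∫ x in (0:ℝ)..1, ∏ i ∈ Finset.Icc 1 m,
          gfun lam n (Finset.Icc ((i-1)*(D+D')+D+1) (i*(D+D'))) x)
        = (1 + lam^2 * (D':ℝ)/2)^m
      ∧ Orth (Sb m) (fun x => ∏ i ∈ Finset.Icc 1 m,
          gfun lam n (Finset.Icc ((i-1)*(D+D')+D+1) (i*(D+D'))) x) := by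
    intro m
    induction m with
    | zero =>
      intro _
      have hempty : Finset.Icc 1 0 = (∅ : Finset ℕ) := by
        apply Finset.Icc_eq_empty; omega
      constructor
      · rw [hempty]
        simp
      · rw [hempty]
        simp only [Finset.prod_empty]
        rw [hSbzero]
        exact orth_const 0 le_rfl 1
    | succ m ih =>
      intro hm1
      have hm := Nat.le_of_succ_le hm1
      obtain ⟨hInt, hOrth⟩ := ih hm
      have hblkeq : Finset.Icc ((m+1-1)*(D+D')+D+1) ((m+1)*(D+D'))
          = Finset.Icc (m*(D+D')+D+1) ((m+1)*(D+D')) := rfl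
      have hprod : (fun x => ∏ i ∈ Finset.Icc 1 (m+1),
            gfun lam n (Finset.Icc ((i-1)*(D+D')+D+1) (i*(D+D'))) x)
          = fun x => (∏ i ∈ Finset.Icc 1 m,
              gfun lam n (Finset.Icc ((i-1)*(D+D')+D+1) (i*(D+D'))) x)
            * gfun lam n (Finset.Icc (m*(D+D')+D+1) ((m+1)*(D+D'))) x := by
        funext x
        rw [Finset.prod_Icc_succ_top (by omega)]
        try rw [hblkeq]
      obtain ⟨hf1, hf2⟩ := hfreqs m hm1
      have hcardblk : (Finset.Icc (m*(D+D')+D+1) ((m+1)*(D+D'))).card = D' := by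
        have := hcard (m+1) (by omega)
        rw [hblkeq] at this
        exact this
      constructor
      · rw [show (∫ x in (0:ℝ)..1, ∏ i ∈ Finset.Icc 1 (m+1),
            gfun lam n (Finset.Icc ((i-1)*(D+D')+D+1) (i*(D+D'))) x)
            = ∫ x in (0:ℝ)..1, (∏ i ∈ Finset.Icc 1 m,
              gfun lam n (Finset.Icc ((i-1)*(D+D')+D+1) (i*(D+D'))) x)
            * gfun lam n (Finset.Icc (m*(D+D')+D+1) ((m+1)*(D+D'))) x from by rw [hprod]]
        rw [integral_mul_gfun hOrth (hSb0 m) hf1 hf2, hcardblk, hInt]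
        ring
      · rw [hprod, hSbsucc m]
        have hCb : ∀ k ∈ Finset.Icc (m*(D+D')+D+1) ((m+1)*(D+D')),
            (n k : ℝ) ≤ ((n ((m+1)*(D+D'))):ℝ) := by
          intro k hk
          have hmem := Finset.mem_Icc.mp hk
          exact hmono k _ (by omega) hmem.2
        exact orth_mul_gfun hOrth (hSb0 m) (Nat.cast_nonneg _) hCb
  -- final assembly
  obtain ⟨hIntF, hOrthF⟩ := hOmain nb le_rfl
  have hcontprod : Continuous (fun x => ∏ i ∈ Finset.Icc 1 nb,
      gfun lam n (Finset.Icc ((i-1)*(D+D')+D+1) (i*(D+D'))) x) := hOrthF.1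
  have hptwise : ∀ x : ℝ,
      Real.exp (lam * ∑ i ∈ Finset.Icc 1 nb,
        ∑ k ∈ Finset.Icc ((i-1)*(D+D') + D + 1) (i*(D+D')),
          Real.cos (2 * Real.pi * (n k : ℝ) * x))
      ≤ ∏ i ∈ Finset.Icc 1 nb,
          gfun lam n (Finset.Icc ((i-1)*(D+D')+D+1) (i*(D+D'))) x := by
    intro x
    have h1 : lam * ∑ i ∈ Finset.Icc 1 nb,
        ∑ k ∈ Finset.Icc ((i-1)*(D+D') + D + 1) (i*(D+D')),
          Real.cos (2 * Real.pi * (n k : ℝ) * x)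
        = ∑ i ∈ Finset.Icc 1 nb,
          lam * blkT n (Finset.Icc ((i-1)*(D+D')+D+1) (i*(D+D'))) x := by
      rw [Finset.mul_sum]
      apply Finset.sum_congr rfl
      intro i _
      rw [blkT_apply]
    rw [h1, Real.exp_sum]
    apply Finset.prod_le_prod
    · intro i _
      exact le_of_lt (Real.exp_pos _)
    · intro i hi
      apply exp_le_gfun
      rw [hcard i (Finset.mem_Icc.mp hi).1]
      exact hlamD'
  have hcontexp : Continuous (fun x : ℝ => Real.exp (lam *
      ∑ i ∈ Finset.Icc 1 nb,
        ∑ k ∈ Finset.Icc ((i-1)*(D+D') + D + 1) (i*(D+D')),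
          Real.cos (2 * Real.pi * (n k : ℝ) * x))) := by
    apply Real.continuous_exp.comp
    apply continuous_const.mul
    apply continuous_finset_sum
    intro i _
    apply continuous_finset_sum
    intro k _
    exact Real.continuous_cos.comp (continuous_const.mul continuous_id)
  have hIle : (∫ x in (0:ℝ)..1, Real.exp (lam *
      ∑ i ∈ Finset.Icc 1 nb,
        ∑ k ∈ Finset.Icc ((i-1)*(D+D') + D + 1) (i*(D+D')),
          Real.cos (2 * Real.pi * (n k : ℝ) * x)))
      ≤ ∫ x in (0:ℝ)..1, ∏ i ∈ Finset.Icc 1 nb,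
          gfun lam n (Finset.Icc ((i-1)*(D+D')+D+1) (i*(D+D'))) x := by
    apply intervalIntegral.integral_mono_on (by norm_num)
      (hcontexp.intervalIntegrable 0 1) (hcontprod.intervalIntegrable 0 1)
    intro x _
    exact hptwise x
  rw [hIntF] at hIle
  have hfinal : (1 + lam^2 * (D':ℝ)/2)^nb ≤ Real.exp (lam ^ 2 / 2 * ((nb * D' : ℕ):ℝ)) := by
    have h1 : (1:ℝ) + lam^2 * (D':ℝ)/2 ≤ Real.exp (lam^2 * (D':ℝ)/2) := by
      have := Real.add_one_le_exp (lam^2 * (D':ℝ)/2)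
      linarith
    have h2 : (1 + lam^2 * (D':ℝ)/2)^nb ≤ (Real.exp (lam^2 * (D':ℝ)/2))^nb := by
      apply pow_le_pow_left₀ (by positivity) h1
    have h3 : (Real.exp (lam^2 * (D':ℝ)/2))^nb = Real.exp ((nb:ℝ) * (lam^2 * (D':ℝ)/2)) :=
      (Real.exp_nat_mul _ nb).symm
    have h4 : (nb:ℝ) * (lam^2 * (D':ℝ)/2) = lam ^ 2 / 2 * ((nb * D' : ℕ):ℝ) := by
      push_cast
      ring
    rw [h3, h4] at h2
    exact h2
  linarith
end
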